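/- arXiv:1712.04756 — 3 statements merged into one kernel-verified Lean document; each statement's English description precedes it below -/
import Mathlib

section
/- There exists an absolute constant C > 0 such that the following holds. Let ξ be a random variable on a probability space (Ω, 𝓕, P) with E[ξ²] < ∞, let 𝓖 ⊆ 𝓕 be a sub-σ-algebra with E[ξ | 𝓖] = 0 almost surely, and define ẽ_λ = λ² E[ξ² 1{|λξ| > 1} | 𝓖] + λ³ E[|ξ|³ 1{|λξ| ≤ 1} | 𝓖]. Then for all λ > 0 and all τ ∈ [1/8, 2], almost surely | E[ e^{λξ − τ λ² ξ²} | 𝓖 ] − 1 − (1/2 − τ) λ² E[ξ² | 𝓖] | ≤ C ẽ_λ. -/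
open MeasureTheory Filter
open scoped Topology ENNReal

set_option maxHeartbeats 1000000

/-- `ζ = λξ − λ²ξ²/2`. -/
noncomputable def zetaOf {Ω : Type} (lam : ℝ) (ξ : Ω → ℝ) : Ω → ℝ :=
  fun ω => lam * ξ ω - lam ^ 2 * (ξ ω) ^ 2 / 2

/-- `ẽ_λ = λ² E[ξ² 1{|λξ| > 1} | 𝓖] + λ³ E[|ξ|³ 1{|λξ| ≤ 1} | 𝓖]`,
where `𝓖 = mG` is a sub-σ-algebra. -/
noncomputable def tildeEps {Ω : Type} (mG : MeasurableSpace Ω) [mF : MeasurableSpace Ω]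
    (P : Measure Ω) (lam : ℝ) (ξ : Ω → ℝ) : Ω → ℝ :=
  fun ω =>
    lam ^ 2 * (P[fun ω' => if 1 < |lam * ξ ω'| then (ξ ω') ^ 2 else 0|mG]) ω +
      lam ^ 3 * (P[fun ω' => if |lam * ξ ω'| ≤ 1 then |ξ ω'| ^ 3 else 0|mG]) ω

lemma exp_le8 {τ u : ℝ} (h1 : 1/8 ≤ τ) : Real.exp (u - τ*u^2) ≤ 8 := by
  have hz : u - τ*u^2 ≤ 2 := by nlinarith [sq_nonneg (2*τ*u - 1), sq_nonneg u]
  have h2 : Real.exp (u - τ*u^2) ≤ Real.exp 2 := Real.exp_le_exp.2 hz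
  have he : Real.exp 2 = Real.exp 1 * Real.exp 1 := by
    rw [← Real.exp_add]; norm_num
  have := Real.exp_one_lt_d9
  nlinarith [Real.exp_pos 1]

lemma key_pointwise (τ u : ℝ) (h1 : 1/8 ≤ τ) (h2 : τ ≤ 2) :
    |Real.exp (u - τ*u^2) - 1 - u - (1/2 - τ)*u^2| ≤
      400 * ((if 1 < |u| then u^2 else 0) + (if |u| ≤ 1 then |u|^3 else 0)) := by
  have hexp := exp_le8 (u := u) h1
  have hpos := Real.exp_pos (u - τ*u^2)
  have hau := abs_nonneg u
  have hu1 : u ≤ |u| := le_abs_self u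
  have hu2 : -u ≤ |u| := neg_le_abs u
  have hsq : |u|^2 = u^2 := sq_abs u
  have h3nn : (0:ℝ) ≤ |u|^3 := by positivity
  by_cases hle : |u| ≤ 1
  · rw [if_neg (by simpa using hle), if_pos hle]
    by_cases hsm : |u| ≤ 1/3
    · have hzb : |u - τ*u^2| ≤ 1 := by
        rw [abs_le]; constructor <;> nlinarith
      have hb := Real.exp_bound hzb (by norm_num : 0 < 3)
      have hsum : ∑ i ∈ Finset.range 3, (u - τ*u^2) ^ i / (Nat.factorial i) =
          1 + (u - τ*u^2) + (u - τ*u^2)^2/2 := by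
        simp [Finset.sum_range_succ, Nat.factorial]
      rw [hsum] at hb
      norm_num [Nat.factorial] at hb
      have hzle : |u - τ*u^2| ≤ 2*|u| := by
        rw [abs_le]; constructor <;> nlinarith
      have hz3 : |u - τ*u^2|^3 ≤ 8*|u|^3 := by
        nlinarith [abs_nonneg (u - τ*u^2), pow_le_pow_left₀ (abs_nonneg (u-τ*u^2)) hzle 3]
      have htri := abs_sub_le (Real.exp (u - τ*u^2)) (1 + (u - τ*u^2) + (u - τ*u^2)^2/2)
          (1 + u + (1/2 - τ)*u^2)
      have heq : Real.exp (u - τ*u^2) - 1 - u - (1/2 - τ)*u^2 =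
          Real.exp (u - τ*u^2) - (1 + u + (1/2 - τ)*u^2) := by ring
      rw [heq]
      have hu3 : u^3 ≤ |u|^3 := by rw [← abs_pow]; exact le_abs_self _
      have hu3' : -(|u|^3) ≤ u^3 := by rw [← abs_pow]; exact neg_abs_le _
      have hu4 : u^4 ≤ (1/3)*|u|^3 := by
        have h4 : u^4 = |u|^4 := by rw [← abs_pow, abs_of_nonneg (by positivity)]
        nlinarith
      have hu4' : (0:ℝ) ≤ u^4 := by positivity
      have hp1 : (0:ℝ) ≤ τ := by linarith
      have hA : τ*u^3 ≤ 2*|u|^3 := by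
        nlinarith [mul_le_mul_of_nonneg_left hu3 hp1,
          mul_le_mul_of_nonneg_right h2 h3nn]
      have hA' : -(2*|u|^3) ≤ τ*u^3 := by
        nlinarith [mul_le_mul_of_nonneg_left hu3' hp1,
          mul_le_mul_of_nonneg_right h2 h3nn]
      have hτsq : τ^2 ≤ 4 := by nlinarith
      have hB2 : τ^2*u^4 ≤ (4/3)*|u|^3 := by
        nlinarith [mul_le_mul_of_nonneg_right hτsq hu4', sq_nonneg τ]
      have hBD : (1 + (u - τ*u^2) + (u - τ*u^2)^2/2) - (1 + u + (1/2 - τ)*u^2) =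
          τ^2*u^4/2 - τ*u^3 := by ring
      have hB : |(1 + (u - τ*u^2) + (u - τ*u^2)^2/2) - (1 + u + (1/2 - τ)*u^2)| ≤ 4*|u|^3 := by
        rw [hBD, abs_le]
        constructor <;> nlinarith [mul_nonneg (sq_nonneg τ) hu4']
      calc |Real.exp (u - τ*u^2) - (1 + u + (1/2 - τ)*u^2)| ≤ _ := htri
        _ ≤ 2*|u|^3 + 4*|u|^3 := by
            refine add_le_add (le_trans hb ?_) hB
            nlinarith
        _ ≤ 400 * (0 + |u|^3) := by nlinarith
    · push_neg at hsm
      have h27 : (1:ℝ)/27 ≤ |u|^3 := by nlinarith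
      have hu2le : u^2 ≤ 1 := by nlinarith
      rw [abs_le]; constructor <;> nlinarith
  · push_neg at hle
    rw [if_pos (by simpa using hle), if_neg (by simpa using hle.not_ge)]
    have hu2 : 1 ≤ u^2 := by nlinarith
    have huu : |u| ≤ u^2 := by nlinarith
    rw [abs_le]; constructor <;> nlinarith

/-- Lemma 3.1: for `λ > 0` and `τ ∈ [1/8, 2]`,
`E[e^{λξ − τλ²ξ²} | 𝓖] = 1 + (1/2 − τ)λ² E[ξ² | 𝓖] + O(1) ẽ_λ` a.s. -/
theorem condExp_exp_expansion :
    ∃ C : ℝ, 0 < C ∧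
      ∀ (Ω : Type) (mG : MeasurableSpace Ω) [mF : MeasurableSpace Ω] (P : Measure Ω),
        IsProbabilityMeasure P → mG ≤ mF →
          ∀ ξ : Ω → ℝ, Measurable ξ →
            Integrable (fun ω => (ξ ω) ^ 2) P →
            P[ξ|mG] =ᵐ[P] 0 →
            ∀ lam : ℝ, 0 < lam → ∀ τ : ℝ, 1 / 8 ≤ τ → τ ≤ 2 →
              ∀ᵐ ω ∂P,
                |(P[fun ω' => Real.exp (lam * ξ ω' - τ * lam ^ 2 * (ξ ω') ^ 2)|mG]) ω - 1 -
                      (1 / 2 - τ) * lam ^ 2 * (P[fun ω' => (ξ ω') ^ 2|mG]) ω| ≤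
                  C * tildeEps mG P lam ξ ω := by
  refine ⟨400, by norm_num, ?_⟩
  intro Ω mG mF P hP hle ξ hξ hξ2 hcond lam hlam τ hτ1 hτ2
  haveI := hP
  set c : ℝ := (1/2 - τ) * lam^2 with hc
  set f : Ω → ℝ := fun ω => Real.exp (lam * ξ ω - τ * lam ^ 2 * (ξ ω) ^ 2) with hfdef
  set g1 : Ω → ℝ := fun ω' => if 1 < |lam * ξ ω'| then (ξ ω') ^ 2 else 0 with hg1def
  set g2 : Ω → ℝ := fun ω' => if |lam * ξ ω'| ≤ 1 then |ξ ω'| ^ 3 else 0 with hg2def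
  set r : Ω → ℝ := fun ω => 1 + (lam * ξ ω + c * (ξ ω)^2) with hrdef
  set h : Ω → ℝ := fun ω => f ω - r ω with hhdef
  set b : Ω → ℝ := fun ω => 400 * (lam^2 * g1 ω + lam^3 * g2 ω) with hbdef
  -- Integrability
  have hξ1 : Integrable ξ P := by
    refine ((integrable_const (1:ℝ)).add hξ2).mono' hξ.aestronglyMeasurable ?_
    filter_upwards with ω
    simp only [Real.norm_eq_abs, Pi.add_apply]
    nlinarith [sq_nonneg (|ξ ω| - 1), sq_abs (ξ ω), abs_nonneg (ξ ω)]
  have hmf : Measurable f := by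
    apply Real.measurable_exp.comp
    exact (measurable_const.mul hξ).sub (measurable_const.mul (hξ.pow_const 2))
  have hfint : Integrable f P := by
    refine (integrable_const (8:ℝ)).mono' hmf.aestronglyMeasurable ?_
    filter_upwards with ω
    have heq' : lam * ξ ω - τ * lam ^ 2 * (ξ ω) ^ 2 =
        (lam * ξ ω) - τ * (lam * ξ ω)^2 := by ring
    simp only [hfdef, Real.norm_eq_abs, abs_of_pos (Real.exp_pos _), heq']
    exact exp_le8 hτ1
  have hs1 : MeasurableSet {ω | 1 < |lam * ξ ω|} :=
    measurableSet_lt measurable_const (measurable_const.mul hξ).abs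
  have hs2 : MeasurableSet {ω | |lam * ξ ω| ≤ 1} :=
    measurableSet_le (measurable_const.mul hξ).abs measurable_const
  have hmg1 : Measurable g1 := Measurable.ite hs1 (hξ.pow_const 2) measurable_const
  have hmg2 : Measurable g2 := Measurable.ite hs2 (hξ.abs.pow_const 3) measurable_const
  have hg1int : Integrable g1 P := by
    refine hξ2.mono' hmg1.aestronglyMeasurable ?_
    filter_upwards with ω
    simp only [hg1def, Real.norm_eq_abs]
    split_ifs
    · rw [abs_of_nonneg (by positivity)]
    · simp [sq_nonneg]
  have hg2int : Integrable g2 P := by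
    refine (hξ2.const_mul (1/lam)).mono' hmg2.aestronglyMeasurable ?_
    filter_upwards with ω
    simp only [hg2def, Real.norm_eq_abs]
    split_ifs with hif
    · rw [abs_of_nonneg (by positivity)]
      have hab : lam * |ξ ω| ≤ 1 := by
        rwa [abs_mul, abs_of_pos hlam] at hif
      have h2 : |ξ ω|^2 = (ξ ω)^2 := sq_abs _
      rw [div_mul_eq_mul_div, le_div_iff₀ hlam]
      nlinarith [abs_nonneg (ξ ω)]
    · have : (0:ℝ) ≤ (ξ ω)^2 := sq_nonneg _
      simp only [abs_zero]
      positivity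
  have hi1 : Integrable (fun ω => lam * ξ ω) P := hξ1.const_mul lam
  have hi2 : Integrable (fun ω => c * (ξ ω)^2) P := hξ2.const_mul c
  have hrint : Integrable r P := (integrable_const (1:ℝ)).add (hi1.add hi2)
  have hhint : Integrable h P := hfint.sub hrint
  have hbint : Integrable b P :=
    (((hg1int.const_mul (lam^2)).add (hg2int.const_mul (lam^3))).const_mul 400)
  -- pointwise bound |h| ≤ b
  have hhb : ∀ ω, |h ω| ≤ b ω := by
    intro ω
    have hk := key_pointwise τ (lam * ξ ω) hτ1 hτ2
    have he1 : lam * ξ ω - τ * (lam * ξ ω)^2 = lam * ξ ω - τ * lam ^ 2 * (ξ ω) ^ 2 := by ring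
    rw [he1] at hk
    have he2 : h ω = Real.exp (lam * ξ ω - τ * lam ^ 2 * (ξ ω) ^ 2) - 1 - (lam * ξ ω)
        - (1/2 - τ) * (lam * ξ ω)^2 := by
      simp only [hhdef, hrdef, hfdef, hc]; ring
    rw [he2]
    refine hk.trans (le_of_eq ?_)
    have habs : |lam * ξ ω| = lam * |ξ ω| := by rw [abs_mul, abs_of_pos hlam]
    simp only [hbdef, hg1def, hg2def]
    split_ifs with h1' h2' h3'
    · exact absurd h2' (not_le.2 h1')
    · ring
    · rw [habs]; ring
    · exact absurd (not_lt.1 h1') h3'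
  -- conditional expectation identities
  have e1 : P[f|mG] =ᵐ[P] P[h|mG] + P[r|mG] := by
    have : f = h + r := by funext ω; simp [hhdef]
    rw [this]
    exact condExp_add hhint hrint mG
  have e2 : P[r|mG] =ᵐ[P] (fun _ => (1:ℝ)) + P[fun ω => lam * ξ ω + c * (ξ ω)^2|mG] := by
    have h1' : P[r|mG] =ᵐ[P]
        P[fun _ => (1:ℝ)|mG] + P[fun ω => lam * ξ ω + c * (ξ ω)^2|mG] :=
      condExp_add (integrable_const 1) (hi1.add hi2) mG
    have h2' : P[fun _ => (1:ℝ)|mG] = fun _ => (1:ℝ) := condExp_const hle 1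
    rw [h2'] at h1'
    exact h1'
  have e3 : P[fun ω => lam * ξ ω + c * (ξ ω)^2|mG] =ᵐ[P]
      P[fun ω => lam * ξ ω|mG] + P[fun ω => c * (ξ ω)^2|mG] := condExp_add hi1 hi2 mG
  have e4 : P[fun ω => lam * ξ ω|mG] =ᵐ[P] fun ω => lam * (P[ξ|mG]) ω := by
    filter_upwards [condExp_smul (𝕜 := ℝ) (μ := P) (m := mG) lam ξ] with ω hω
    simpa [Pi.smul_def, smul_eq_mul] using hω
  have e5 : P[fun ω => c * (ξ ω)^2|mG] =ᵐ[P]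
      fun ω => c * (P[fun ω' => (ξ ω')^2|mG]) ω := by
    filter_upwards [condExp_smul (𝕜 := ℝ) (μ := P) (m := mG)
      c (fun ω => (ξ ω)^2)] with ω hω
    simpa [Pi.smul_def, smul_eq_mul] using hω
  have m1 : P[h|mG] ≤ᵐ[P] P[b|mG] :=
    condExp_mono hhint hbint (Eventually.of_forall fun ω =>
      (le_abs_self _).trans (hhb ω))
  have m2 : P[fun ω => -h ω|mG] ≤ᵐ[P] P[b|mG] :=
    condExp_mono hhint.neg hbint (Eventually.of_forall fun ω => by
      have := (neg_abs_le (h ω))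
      have := hhb ω
      simp only
      linarith [le_abs_self (h ω), abs_nonneg (h ω), neg_le_abs (h ω)])
  have m3 : P[fun ω => -h ω|mG] =ᵐ[P] fun ω => -(P[h|mG]) ω := by
    filter_upwards [condExp_neg (μ := P) (m := mG) h] with ω hω
    simpa [Pi.neg_def] using hω
  have eb : P[b|mG] =ᵐ[P] fun ω => 400 * (lam^2 * (P[g1|mG]) ω + lam^3 * (P[g2|mG]) ω) := by
    have b1 : P[b|mG] =ᵐ[P] fun ω =>
        400 * (P[fun ω' => lam^2 * g1 ω' + lam^3 * g2 ω'|mG]) ω := by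
      filter_upwards [condExp_smul (𝕜 := ℝ) (μ := P) (m := mG) (400:ℝ)
        (fun ω => lam^2 * g1 ω + lam^3 * g2 ω)] with ω hω
      simpa [Pi.smul_def, smul_eq_mul] using hω
    have b2 : P[fun ω' => lam^2 * g1 ω' + lam^3 * g2 ω'|mG] =ᵐ[P]
        P[fun ω' => lam^2 * g1 ω'|mG] + P[fun ω' => lam^3 * g2 ω'|mG] :=
      condExp_add (hg1int.const_mul _) (hg2int.const_mul _) mG
    have b3 : P[fun ω' => lam^2 * g1 ω'|mG] =ᵐ[P] fun ω => lam^2 * (P[g1|mG]) ω := by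
      filter_upwards [condExp_smul (𝕜 := ℝ) (μ := P) (m := mG) (lam^2) g1] with ω hω
      simpa [Pi.smul_def, smul_eq_mul] using hω
    have b4 : P[fun ω' => lam^3 * g2 ω'|mG] =ᵐ[P] fun ω => lam^3 * (P[g2|mG]) ω := by
      filter_upwards [condExp_smul (𝕜 := ℝ) (μ := P) (m := mG) (lam^3) g2] with ω hω
      simpa [Pi.smul_def, smul_eq_mul] using hω
    filter_upwards [b1, b2, b3, b4] with ω h1' h2' h3' h4'
    rw [h1']
    have : (P[fun ω' => lam^2 * g1 ω' + lam^3 * g2 ω'|mG]) ω =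
        lam^2 * (P[g1|mG]) ω + lam^3 * (P[g2|mG]) ω := by
      rw [h2', Pi.add_apply, h3', h4']
    rw [this]
  -- combine
  filter_upwards [e1, e2, e3, e4, e5, m1, m2, m3, eb, hcond] with ω he1 he2 he3 he4 he5
    hm1 hm2 hm3 heb hc0
  have hPr : (P[r|mG]) ω = 1 + c * (P[fun ω' => (ξ ω')^2|mG]) ω := by
    rw [he2, Pi.add_apply, he3, Pi.add_apply, he4, he5, hc0]
    simp
  have hPf : (P[f|mG]) ω = (P[h|mG]) ω + (1 + c * (P[fun ω' => (ξ ω')^2|mG]) ω) := by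
    rw [he1, Pi.add_apply, hPr]
  have habs : |(P[h|mG]) ω| ≤ (P[b|mG]) ω := by
    rw [abs_le]
    constructor
    · have := hm2
      rw [hm3] at hm2
      linarith [hm2]
    · exact hm1
  have hfin : (P[f|mG]) ω - 1 - c * (P[fun ω' => (ξ ω')^2|mG]) ω = (P[h|mG]) ω := by
    rw [hPf]; ring
  calc |(P[f|mG]) ω - 1 - c * (P[fun ω' => (ξ ω')^2|mG]) ω|
      = |(P[h|mG]) ω| := by rw [hfin]
    _ ≤ (P[b|mG]) ω := habs
    _ = 400 * (lam^2 * (P[g1|mG]) ω + lam^3 * (P[g2|mG]) ω) := heb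
    _ = 400 * tildeEps mG P lam ξ ω := by
        simp only [tildeEps, hg1def, hg2def]
end

section
/- There exists an absolute constant C > 0 such that the following holds. Let ξ be a random variable on a probability space (Ω, 𝓕, P) with E[ξ²] < ∞, let 𝓖 ⊆ 𝓕 be a sub-σ-algebra with E[ξ | 𝓖] = 0 almost surely, and for λ > 0 set ζ = λξ − λ²ξ²/2 and ẽ_λ = λ² E[ξ² 1{|λξ| > 1} | 𝓖] + λ³ E[|ξ|³ 1{|λξ| ≤ 1} | 𝓖]. Then for all λ > 0, almost surely: (i) | E[e^ζ | 𝓖] − 1 | ≤ C ẽ_λ; (ii) | E[ζ e^ζ | 𝓖] − (λ²/2) E[ξ² | 𝓖] | ≤ C ẽ_λ; (iii) | E[ζ² e^ζ | 𝓖] − λ² E[ξ² | 𝓖] | ≤ C ẽ_λ; (iv) E[|ζ|³ e^ζ | 𝓖] ≤ C ẽ_λ; (v) ( E[ζ e^ζ | 𝓖] )² ≤ C ẽ_λ. -/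
open MeasureTheory Filter
open scoped Topology ENNReal

set_option maxHeartbeats 1000000

lemma Lexp_half_le_two : Real.exp (1/2) ≤ 2 := by
  nlinarith [Real.exp_pos (1/2), Real.exp_one_lt_d9, Real.exp_add (1/2) (1/2),
    Real.exp_pos (1:ℝ)]

lemma Lzeta_le_half (x : ℝ) : x - x^2/2 ≤ 1/2 := by nlinarith [sq_nonneg (x-1)]

lemma Labs_mul_exp_le {t : ℝ} (ht : t ≤ 1/2) : |t| * Real.exp t ≤ 1 := by
  rcases le_or_gt t 0 with h | h
  · rw [abs_of_nonpos h]
    have h1 : -t ≤ Real.exp (-1 - t) := by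
      have := Real.add_one_le_exp (-1 - t); linarith
    have h2 : -t * Real.exp t ≤ Real.exp (-1 - t) * Real.exp t :=
      mul_le_mul_of_nonneg_right h1 (Real.exp_pos t).le
    rw [← Real.exp_add] at h2
    have h3 : Real.exp (-1 - t + t) ≤ 1 := by
      rw [show (-1 - t + t : ℝ) = -1 by ring]
      exact (Real.exp_le_one_iff.mpr (by norm_num))
    linarith
  · rw [abs_of_pos h]
    have h2 : Real.exp t ≤ 2 := le_trans (Real.exp_le_exp.mpr ht) Lexp_half_le_two
    nlinarith [Real.exp_pos t]

lemma Lexp_taylor3 {x : ℝ} (hx : |x| ≤ 1) :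
    |Real.exp x - (1 + x + x^2/2)| ≤ (2/9)*|x|^3 := by
  have h := Real.exp_bound hx (n := 3) (by norm_num)
  simp [Finset.sum_range_succ, Nat.factorial] at h
  linarith [h]

lemma Lexp_taylor2 {x : ℝ} (hx : |x| ≤ 1) :
    |Real.exp x - (1 + x)| ≤ (3/4)*x^2 := by
  have h := Real.exp_bound hx (n := 2) (by norm_num)
  simp [Finset.sum_range_succ, Nat.factorial] at h
  have hx2 : |x|^2 = x^2 := sq_abs x
  nlinarith [h]

lemma LexpA {x : ℝ} (hx : |x| ≤ 1) :
    |Real.exp (x - x^2/2) - 1 - x| ≤ 2*|x|^3 := by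
  set y := |x| with hy
  have hy0 : 0 ≤ y := abs_nonneg x
  have hxy : x^2 = y^2 := (sq_abs x).symm
  have hsplit : Real.exp (x - x^2/2) = Real.exp x * Real.exp (-(x^2/2)) := by
    rw [← Real.exp_add]; ring_nf
  have hv : |(-(x^2/2))| ≤ 1 := by rw [abs_neg, abs_of_nonneg (by positivity)]; nlinarith
  have hr1 := Lexp_taylor3 hx
  have hr2 := Lexp_taylor2 hv
  set r1 := Real.exp x - (1 + x + x^2/2) with hr1d
  set r2 := Real.exp (-(x^2/2)) - (1 + -(x^2/2)) with hr2d
  have he1 : Real.exp x = 1 + x + x^2/2 + r1 := by rw [hr1d]; ring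
  have he2 : Real.exp (-(x^2/2)) = 1 - x^2/2 + r2 := by rw [hr2d]; ring
  rw [hsplit, he1, he2]
  have hnx : -y ≤ x := neg_abs_le x
  have hpx : x ≤ y := le_abs_self x
  have hy1 : y ≤ 1 := hx
  have hy3 : y^3 ≤ 1 := pow_le_one₀ hy0 hy1
  have hy30 : 0 ≤ y^3 := by positivity
  have hy43 : y^4 ≤ y^3 := pow_le_pow_of_le_one hy0 hy1 (by norm_num)
  have hx4 : x^4 = y^4 := by
    calc x^4 = (x^2)^2 := by ring
      _ = (y^2)^2 := by rw [hxy]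
      _ = y^4 := by ring
  have hx3a : x^3 ≤ y^3 := by
    calc x^3 ≤ |x^3| := le_abs_self _
      _ = y^3 := by rw [abs_pow, hy]
  have hx3b : -(y^3) ≤ x^3 := by
    have : -|x^3| ≤ x^3 := neg_abs_le _
    calc -(y^3) = -|x^3| := by rw [abs_pow, hy]
      _ ≤ x^3 := this
  have hA : |(-(x^3)/2 - x^4/4)| ≤ (3/4)*y^3 := by
    rw [abs_le]; constructor <;> [linarith [hx3a, hy43, hx4]; linarith [hx3b, hy43, hx4, pow_nonneg hy0 4]]
  have hp : |1 + x + x^2/2| ≤ 5/2 := by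
    rw [abs_le]; constructor <;> nlinarith [sq_nonneg y]
  have hq : |1 - x^2/2| ≤ 1 := by
    rw [abs_le]; constructor <;> nlinarith [sq_nonneg y, sq_nonneg x]
  have hr2'' : |r2| ≤ (3/16)*y^3 := by
    have h1 : (-(x^2/2))^2 = x^4/4 := by ring
    rw [h1] at hr2
    calc |r2| ≤ 3/4*(x^4/4) := hr2
      _ = (3/16)*y^4 := by rw [hx4]; ring
      _ ≤ (3/16)*y^3 := by linarith
  have hr1'' : |r1| ≤ (2/9)*y^3 := by rw [hy]; exact hr1
  have key : (1 + x + x^2/2 + r1) * (1 - x^2/2 + r2) - 1 - x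
      = (-(x^3)/2 - x^4/4) + (1 + x + x^2/2)*r2 + (1 - x^2/2)*r1 + r1*r2 := by ring
  rw [key]
  have tri : |(-(x^3)/2 - x^4/4) + (1 + x + x^2/2)*r2 + (1 - x^2/2)*r1 + r1*r2|
      ≤ |(-(x^3)/2 - x^4/4)| + |(1 + x + x^2/2)*r2| + |(1 - x^2/2)*r1| + |r1*r2| := by
    calc _ ≤ |(-(x^3)/2 - x^4/4) + (1 + x + x^2/2)*r2 + (1 - x^2/2)*r1| + |r1*r2| :=
          abs_add_le _ _
      _ ≤ (|(-(x^3)/2 - x^4/4)| + |(1 + x + x^2/2)*r2| + |(1 - x^2/2)*r1|) + |r1*r2| := by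
          gcongr; exact abs_add_three _ _ _
      _ = _ := by ring
  have hB : |(1 + x + x^2/2)*r2| ≤ (5/2)*((3/16)*y^3) := by
    rw [abs_mul]; exact mul_le_mul hp hr2'' (abs_nonneg _) (by norm_num)
  have hC : |(1 - x^2/2)*r1| ≤ 1*((2/9)*y^3) := by
    rw [abs_mul]; exact mul_le_mul hq hr1'' (abs_nonneg _) (by norm_num)
  have hD : |r1*r2| ≤ ((2/9)*y^3)*((3/16)*y^3) := by
    rw [abs_mul]
    exact mul_le_mul hr1'' hr2'' (abs_nonneg _) (by positivity)
  have hy33 : y^3*y^3 ≤ y^3 := by nlinarith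
  have hD2 : ((2/9)*y^3)*((3/16)*y^3) ≤ (1/24)*y^3 := by nlinarith
  linarith [tri, hA, hB, hC, hD, hD2]

lemma Lzeta_abs {x : ℝ} (hx : |x| ≤ 1) : |x - x^2/2| ≤ (3/2)*|x| := by
  have h1 : -|x| ≤ x := neg_abs_le x
  have h2 : x ≤ |x| := le_abs_self x
  have h3 : x^2 = |x|^2 := (sq_abs x).symm
  have h4 : |x|^2 ≤ |x| := by nlinarith [abs_nonneg x]
  rw [abs_le]; constructor <;> nlinarith [sq_nonneg x]

lemma Lexp_zeta_le {x : ℝ} : Real.exp (x - x^2/2) ≤ 2 :=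
  le_trans (Real.exp_le_exp.mpr (by nlinarith [sq_nonneg (x-1)])) Lexp_half_le_two

lemma Lpw5 (x : ℝ) : |(x - x^2/2) * Real.exp (x - x^2/2)| ≤ 1 := by
  rw [abs_mul, abs_of_pos (Real.exp_pos _)]
  exact Labs_mul_exp_le (by nlinarith [sq_nonneg (x-1)])

lemma Lsq_exp {t : ℝ} (ht : t ≤ 1/2) : t^2 * Real.exp t ≤ 4 := by
  have h := Labs_mul_exp_le (t := t/2) (by linarith)
  have he : Real.exp (t/2) * Real.exp (t/2) = Real.exp t := by
    rw [← Real.exp_add]; ring_nf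
  have h2 : (|t/2| * Real.exp (t/2)) * (|t/2| * Real.exp (t/2)) ≤ 1 :=
    mul_le_one₀ h (by positivity) h
  have h3 : (|t/2| * Real.exp (t/2)) * (|t/2| * Real.exp (t/2)) = t^2/4 * Real.exp t := by
    have : |t/2| * |t/2| = t^2/4 := by
      rw [← abs_mul, abs_of_nonneg (mul_self_nonneg (t/2))]; ring
    calc (|t/2| * Real.exp (t/2)) * (|t/2| * Real.exp (t/2))
        = (|t/2| * |t/2|) * (Real.exp (t/2) * Real.exp (t/2)) := by ring
      _ = t^2/4 * Real.exp t := by rw [this, he]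
  nlinarith [h2, h3]

lemma Lcube_exp {t : ℝ} (ht : t ≤ 1/2) : |t|^3 * Real.exp t ≤ 27 := by
  have h := Labs_mul_exp_le (t := t/3) (by linarith)
  have he : Real.exp (t/3) * Real.exp (t/3) * Real.exp (t/3) = Real.exp t := by
    rw [← Real.exp_add, ← Real.exp_add]; ring_nf
  have habs : |t/3| * |t/3| * |t/3| = |t|^3/27 := by
    have h3 : |t/3| = |t|/3 := by rw [abs_div]; norm_num
    rw [h3]; ring
  have h2 : (|t/3| * Real.exp (t/3)) * ((|t/3| * Real.exp (t/3)) * (|t/3| * Real.exp (t/3))) ≤ 1 :=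
    mul_le_one₀ h (by positivity) (mul_le_one₀ h (by positivity) h)
  have h3 : (|t/3| * Real.exp (t/3)) * ((|t/3| * Real.exp (t/3)) * (|t/3| * Real.exp (t/3)))
      = |t|^3/27 * Real.exp t := by
    calc (|t/3| * Real.exp (t/3)) * ((|t/3| * Real.exp (t/3)) * (|t/3| * Real.exp (t/3)))
        = (|t/3| * |t/3| * |t/3|) * (Real.exp (t/3) * Real.exp (t/3) * Real.exp (t/3)) := by ring
      _ = |t|^3/27 * Real.exp t := by rw [habs, he]
  nlinarith [h2, h3]

noncomputable def gfun (x : ℝ) : ℝ :=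
  (if 1 < |x| then x^2 else 0) + (if |x| ≤ 1 then |x|^3 else 0)

lemma gfun_nonneg (x : ℝ) : 0 ≤ gfun x := by
  unfold gfun; split_ifs <;> nlinarith [sq_nonneg x, pow_nonneg (abs_nonneg x) 3]

lemma Lpw1 (x : ℝ) : |Real.exp (x - x^2/2) - 1 - x| ≤ 30 * gfun x := by
  by_cases h : |x| ≤ 1
  · have h2 := LexpA h
    have : gfun x = |x|^3 := by simp [gfun, not_lt.mpr h, h]
    rw [this]
    nlinarith [pow_nonneg (abs_nonneg x) 3]
  · push_neg at h
    have hg : gfun x = x^2 := by simp [gfun, h, not_le.mpr h]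
    rw [hg]
    have he := Lexp_zeta_le (x := x)
    have hep := (Real.exp_pos (x - x^2/2)).le
    have hy2 : 1 ≤ x^2 := by nlinarith [sq_abs x, abs_nonneg x]
    have hyy : |x| ≤ x^2 := by nlinarith [sq_abs x, abs_nonneg x]
    have h1 : -|x| ≤ x := neg_abs_le x
    have h2 : x ≤ |x| := le_abs_self x
    rw [abs_le]; constructor <;> nlinarith

lemma Lpw2 (x : ℝ) :
    |(x - x^2/2) * Real.exp (x - x^2/2) - x - x^2/2| ≤ 30 * gfun x := by
  by_cases h : |x| ≤ 1
  · have hgf : gfun x = |x|^3 := by simp [gfun, not_lt.mpr h, h]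
    rw [hgf]
    set s := Real.exp (x - x^2/2) - 1 - x with hs
    have hsb : |s| ≤ 2*|x|^3 := LexpA h
    have he : Real.exp (x - x^2/2) = 1 + x + s := by rw [hs]; ring
    rw [he]
    have key : (x - x^2/2) * (1 + x + s) - x - x^2/2 = -(x^3)/2 + (x - x^2/2)*s := by ring
    rw [key]
    have t1 : |(-(x^3)/2)| = |x|^3/2 := by rw [abs_div, abs_neg, abs_pow]; norm_num
    have t2 : |(x - x^2/2)*s| ≤ ((3/2)*|x|)*(2*|x|^3) := by
      rw [abs_mul]
      exact mul_le_mul (Lzeta_abs h) hsb (abs_nonneg _) (by positivity)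
    have t3 : |x|^4 ≤ |x|^3 := pow_le_pow_of_le_one (abs_nonneg x) h (by norm_num)
    calc |(-(x^3)/2) + (x - x^2/2)*s| ≤ |(-(x^3)/2)| + |(x - x^2/2)*s| := abs_add_le _ _
      _ ≤ |x|^3/2 + ((3/2)*|x|)*(2*|x|^3) := by rw [t1]; linarith
      _ ≤ 30 * |x|^3 := by nlinarith [t3, pow_nonneg (abs_nonneg x) 3]
  · push_neg at h
    have hg : gfun x = x^2 := by simp [gfun, h, not_le.mpr h]
    rw [hg]
    have hp := abs_le.mp (Lpw5 x)
    have hy2 : 1 ≤ x^2 := by nlinarith [sq_abs x, abs_nonneg x]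
    have hyy : |x| ≤ x^2 := by nlinarith [sq_abs x, abs_nonneg x]
    have h1 : -|x| ≤ x := neg_abs_le x
    have h2 : x ≤ |x| := le_abs_self x
    rw [abs_le]; constructor <;> [nlinarith [hp.1]; nlinarith [hp.2]]

lemma Lpw3 (x : ℝ) :
    |(x - x^2/2)^2 * Real.exp (x - x^2/2) - x^2| ≤ 30 * gfun x := by
  by_cases h : |x| ≤ 1
  · have hgf : gfun x = |x|^3 := by simp [gfun, not_lt.mpr h, h]
    rw [hgf]
    set s := Real.exp (x - x^2/2) - 1 - x with hs
    have hsb : |s| ≤ 2*|x|^3 := LexpA h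
    have he : Real.exp (x - x^2/2) = 1 + x + s := by rw [hs]; ring
    rw [he]
    have key : (x - x^2/2)^2 * (1 + x + s) - x^2
        = (-(3/4)*x^4 + (1/4)*x^5) + (x - x^2/2)^2*s := by ring
    rw [key]
    set y := |x| with hy
    have hy0 : 0 ≤ y := abs_nonneg x
    have hy1 : y ≤ 1 := h
    have hx4 : |x^4| ≤ y^3 := by
      rw [abs_pow]
      exact pow_le_pow_of_le_one hy0 hy1 (by norm_num)
    have hx5 : |x^5| ≤ y^3 := by
      rw [abs_pow]
      exact pow_le_pow_of_le_one hy0 hy1 (by norm_num)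
    have t1 : |(-(3/4)*x^4 + (1/4)*x^5)| ≤ y^3 := by
      calc |(-(3/4)*x^4 + (1/4)*x^5)| ≤ |(-(3/4)*x^4)| + |(1/4)*x^5| := abs_add_le _ _
        _ = (3/4)*|x^4| + (1/4)*|x^5| := by
            rw [abs_mul, abs_mul, abs_neg, abs_of_nonneg (by norm_num : (0:ℝ) ≤ (3:ℝ)/4),
              abs_of_nonneg (by norm_num : (0:ℝ) ≤ (1:ℝ)/4)]
        _ ≤ y^3 := by linarith
    have hzeta : |(x - x^2/2)^2| ≤ (9/4)*y^2 := by
      rw [abs_pow]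
      have := Lzeta_abs h
      nlinarith [abs_nonneg (x - x^2/2)]
    have t2 : |(x - x^2/2)^2*s| ≤ ((9/4)*y^2)*(2*y^3) := by
      rw [abs_mul]
      exact mul_le_mul hzeta hsb (abs_nonneg _) (by positivity)
    have hy2le : y^2 ≤ 1 := by nlinarith
    have hy23 : y^2*y^3 ≤ y^3 := by
      nlinarith [mul_nonneg (sub_nonneg.mpr hy2le) (pow_nonneg hy0 3)]
    calc |(-(3/4)*x^4 + (1/4)*x^5) + (x - x^2/2)^2*s|
        ≤ |(-(3/4)*x^4 + (1/4)*x^5)| + |(x - x^2/2)^2*s| := abs_add_le _ _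
      _ ≤ y^3 + ((9/4)*y^2)*(2*y^3) := by linarith
      _ ≤ 30 * y^3 := by nlinarith [hy23, pow_nonneg hy0 3]
  · push_neg at h
    have hg : gfun x = x^2 := by simp [gfun, h, not_le.mpr h]
    rw [hg]
    have hsq : (x - x^2/2)^2 * Real.exp (x - x^2/2) ≤ 4 :=
      Lsq_exp (by nlinarith [sq_nonneg (x - x^2/2 - 1), sq_nonneg (x-1)])
    have hpos : 0 ≤ (x - x^2/2)^2 * Real.exp (x - x^2/2) := by positivity
    have hy2 : 1 ≤ x^2 := by nlinarith [sq_abs x, abs_nonneg x]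
    rw [abs_le]; constructor <;> nlinarith

lemma Lpw4 (x : ℝ) :
    |x - x^2/2|^3 * Real.exp (x - x^2/2) ≤ 30 * gfun x := by
  by_cases h : |x| ≤ 1
  · have hgf : gfun x = |x|^3 := by simp [gfun, not_lt.mpr h, h]
    rw [hgf]
    have hz := Lzeta_abs h
    have he := Lexp_zeta_le (x := x)
    have hep := (Real.exp_pos (x - x^2/2)).le
    have hz3 : |x - x^2/2|^3 ≤ (27/8)*|x|^3 := by
      calc |x - x^2/2|^3 ≤ ((3/2)*|x|)^3 := pow_le_pow_left₀ (abs_nonneg _) hz 3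
        _ = (27/8)*|x|^3 := by ring
    calc |x - x^2/2|^3 * Real.exp (x - x^2/2) ≤ ((27/8)*|x|^3) * 2 := by
          exact mul_le_mul hz3 he hep (by positivity)
      _ ≤ 30 * |x|^3 := by nlinarith [pow_nonneg (abs_nonneg x) 3]
  · push_neg at h
    have hg : gfun x = x^2 := by simp [gfun, h, not_le.mpr h]
    rw [hg]
    have hc : |x - x^2/2|^3 * Real.exp (x - x^2/2) ≤ 27 :=
      Lcube_exp (by nlinarith [sq_nonneg (x-1)])
    have hy2 : 1 ≤ x^2 := by nlinarith [sq_abs x, abs_nonneg x]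
    nlinarith

open MeasureTheory

section MT
variable {Ω : Type} {mG : MeasurableSpace Ω} [mF : MeasurableSpace Ω] {P : Measure Ω}

lemma Lbdd_int [IsProbabilityMeasure P] {f : Ω → ℝ} (hf : AEStronglyMeasurable f P)
    {c : ℝ} (hb : ∀ ω, |f ω| ≤ c) : Integrable f P :=
  Integrable.mono' (integrable_const c) hf
    (ae_of_all _ fun ω => by simpa [Real.norm_eq_abs] using hb ω)

lemma Lce_bound [IsProbabilityMeasure P] (hle : mG ≤ mF) {f : Ω → ℝ}
    (hfi : Integrable f P) {c : ℝ} (hb : ∀ ω, |f ω| ≤ c) :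
    ∀ᵐ ω ∂P, |(P[f|mG]) ω| ≤ c := by
  have h1 : P[f|mG] ≤ᵐ[P] P[fun _ => c|mG] :=
    condExp_mono hfi (integrable_const c) (ae_of_all _ fun ω => (abs_le.mp (hb ω)).2)
  have h2 : P[fun _ => -c|mG] ≤ᵐ[P] P[f|mG] :=
    condExp_mono (integrable_const (-c)) hfi (ae_of_all _ fun ω => (abs_le.mp (hb ω)).1)
  rw [condExp_const hle] at h1 h2
  filter_upwards [h1, h2] with ω e1 e2
  rw [abs_le]; exact ⟨e2, e1⟩

lemma Lcompare [IsProbabilityMeasure P] (hle : mG ≤ mF) {f h G : Ω → ℝ} {K : ℝ}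
    (hf : Integrable f P) (hh : Integrable h P) (hG : Integrable G P)
    (hb : ∀ ω, |f ω - h ω| ≤ K * G ω) :
    ∀ᵐ ω ∂P, |(P[f|mG]) ω - (P[h|mG]) ω| ≤ K * (P[G|mG]) ω := by
  have hsub := condExp_sub (m := mG) hf hh
  have hub : P[f - h|mG] ≤ᵐ[P] P[K • G|mG] :=
    condExp_mono (hf.sub hh) (hG.smul K)
      (ae_of_all _ fun ω => by
        have := (abs_le.mp (hb ω)).2
        simp only [Pi.sub_apply, Pi.smul_apply, smul_eq_mul]
        linarith)
  have hlb : P[(-K) • G|mG] ≤ᵐ[P] P[f - h|mG] :=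
    condExp_mono (hG.smul (-K)) (hf.sub hh)
      (ae_of_all _ fun ω => by
        have := (abs_le.mp (hb ω)).1
        simp only [Pi.sub_apply, Pi.smul_apply, smul_eq_mul]
        linarith)
  have hsm1 := condExp_smul (μ := P) (m := mG) K G
  have hsm2 := condExp_smul (μ := P) (m := mG) (-K) G
  filter_upwards [hsub, hub, hlb, hsm1, hsm2] with ω e1 e2 e3 e4 e5
  simp only [Pi.sub_apply, Pi.smul_apply, smul_eq_mul] at e1 e2 e3 e4 e5
  rw [abs_le]
  constructor
  · rw [← e1]; rw [e5] at e3; linarith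
  · rw [← e1]; rw [e4] at e2; linarith

lemma Ljensen [IsProbabilityMeasure P] (hle : mG ≤ mF) {q : Ω → ℝ}
    (hq : Measurable q) (h0 : ∀ ω, 0 ≤ q ω) (h1 : ∀ ω, q ω ≤ 1) :
    ∀ᵐ ω ∂P, ((P[q|mG]) ω)^2 ≤ (P[fun ω' => (q ω')^2|mG]) ω := by
  haveI : SigmaFinite (P.trim hle) := by infer_instance
  set H : Ω → ℝ := P[q|mG] with hH
  have hHm : StronglyMeasurable[mG] H := stronglyMeasurable_condExp
  have hqb : ∀ ω, |q ω| ≤ 1 := fun ω => by rw [abs_of_nonneg (h0 ω)]; exact h1 ω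
  have hqi : Integrable q P := Lbdd_int hq.aestronglyMeasurable hqb
  have hq2i : Integrable (fun ω => (q ω)^2) P :=
    Lbdd_int (hq.pow_const 2).aestronglyMeasurable
      (fun ω => by rw [abs_pow]; exact pow_le_one₀ (abs_nonneg _) (hqb ω))
  have hHi : Integrable H P := integrable_condExp
  have hH1 : ∀ᵐ ω ∂P, |H ω| ≤ 1 := Lce_bound hle hqi hqb
  have hHsm : AEStronglyMeasurable H P := (hHm.mono hle).aestronglyMeasurable
  have hHq_i : Integrable (H * q) P := by
    refine Integrable.mono' hHi.abs (hHsm.mul hq.aestronglyMeasurable) (ae_of_all _ fun ω => ?_)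
    simp only [Pi.mul_apply, Real.norm_eq_abs, abs_mul]
    nlinarith [abs_nonneg (H ω), abs_nonneg (q ω), hqb ω]
  have hHH_i : Integrable (H * H) P := by
    refine Integrable.mono' hHi.abs (hHsm.mul hHsm) ?_
    filter_upwards [hH1] with ω hω
    simp only [Pi.mul_apply, Real.norm_eq_abs, abs_mul]
    nlinarith [abs_nonneg (H ω)]
  have hpull : P[H * q|mG] =ᵐ[P] H * P[q|mG] :=
    condExp_mul_of_stronglyMeasurable_left hHm hHq_i hqi
  have hkey : (fun ω => (q ω - H ω)^2)
      = (fun ω => (q ω)^2) + ((-2:ℝ) • (H * q)) + H * H := by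
    funext ω
    simp only [Pi.add_apply, Pi.smul_apply, Pi.mul_apply, smul_eq_mul]
    ring
  have hnn : 0 ≤ᵐ[P] P[fun ω => (q ω - H ω)^2|mG] :=
    condExp_nonneg (ae_of_all _ fun ω => sq_nonneg _)
  have hce1 : P[(fun ω => (q ω)^2) + ((-2:ℝ) • (H * q)) + H * H|mG]
      =ᵐ[P] P[(fun ω => (q ω)^2) + ((-2:ℝ) • (H * q))|mG] + P[H * H|mG] :=
    condExp_add (hq2i.add (hHq_i.smul (-2:ℝ))) hHH_i mG
  have hce2 : P[(fun ω => (q ω)^2) + ((-2:ℝ) • (H * q))|mG]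
      =ᵐ[P] P[fun ω => (q ω)^2|mG] + P[(-2:ℝ) • (H * q)|mG] :=
    condExp_add hq2i (hHq_i.smul (-2:ℝ)) mG
  have hce3 := condExp_smul (μ := P) (m := mG) (-2:ℝ) (H * q)
  have hceHH : P[H * H|mG] = H * H :=
    condExp_of_stronglyMeasurable hle (hHm.mul hHm) hHH_i
  rw [hkey] at hnn
  filter_upwards [hnn, hce1, hce2, hce3, hpull] with ω e0 e1 e2 e3 e5
  simp only [Pi.add_apply, Pi.smul_apply, Pi.mul_apply, smul_eq_mul, Pi.zero_apply,
    hceHH] at e0 e1 e2 e3 e5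
  rw [e1, e2, e3, e5] at e0
  have hHω : H ω = (P[q|mG]) ω := rfl
  rw [← hHω] at e0
  have hsq : H ω^2 = H ω * H ω := sq (H ω)
  have hgoal : ((P[q|mG]) ω)^2 = H ω^2 := by rw [hHω]
  rw [hgoal]
  linarith

end MT

/-- Lemma 3.2: conditional expectations of `e^ζ`, `ζe^ζ`, `ζ²e^ζ`, `|ζ|³e^ζ`
with `ζ = λξ − λ²ξ²/2` are controlled by `ẽ_λ`. -/
theorem condExp_zeta_moments :
    ∃ C : ℝ, 0 < C ∧
      ∀ (Ω : Type) (mG : MeasurableSpace Ω) [mF : MeasurableSpace Ω] (P : Measure Ω),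
        IsProbabilityMeasure P → mG ≤ mF →
          ∀ ξ : Ω → ℝ, Measurable ξ →
            Integrable (fun ω => (ξ ω) ^ 2) P →
            P[ξ|mG] =ᵐ[P] 0 →
            ∀ lam : ℝ, 0 < lam →
              ∀ᵐ ω ∂P,
                |(P[fun ω' => Real.exp (zetaOf lam ξ ω')|mG]) ω - 1| ≤
                    C * tildeEps mG P lam ξ ω ∧
                  |(P[fun ω' => zetaOf lam ξ ω' * Real.exp (zetaOf lam ξ ω')|mG]) ω -
                      lam ^ 2 / 2 * (P[fun ω' => (ξ ω') ^ 2|mG]) ω| ≤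
                    C * tildeEps mG P lam ξ ω ∧
                  |(P[fun ω' => (zetaOf lam ξ ω') ^ 2 * Real.exp (zetaOf lam ξ ω')|mG]) ω -
                      lam ^ 2 * (P[fun ω' => (ξ ω') ^ 2|mG]) ω| ≤
                    C * tildeEps mG P lam ξ ω ∧
                  (P[fun ω' => |zetaOf lam ξ ω'| ^ 3 * Real.exp (zetaOf lam ξ ω')|mG]) ω ≤
                    C * tildeEps mG P lam ξ ω ∧
                  ((P[fun ω' => zetaOf lam ξ ω' * Real.exp (zetaOf lam ξ ω')|mG]) ω) ^ 2 ≤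
                    C * tildeEps mG P lam ξ ω := by
  refine ⟨100, by norm_num, ?_⟩
  intro Ω mG mF P hP hle ξ hξ hξ2 hcond lam hlam
  haveI := hP
  have hzeq : ∀ ω, zetaOf lam ξ ω = (lam * ξ ω) - (lam * ξ ω)^2/2 := fun ω => by
    simp only [zetaOf]; ring
  have hxm : Measurable (fun ω => lam * ξ ω) := hξ.const_mul lam
  -- the dominating function G
  set f1 : Ω → ℝ := fun ω' => if 1 < |lam * ξ ω'| then (ξ ω') ^ 2 else 0 with hf1def
  set f2 : Ω → ℝ := fun ω' => if |lam * ξ ω'| ≤ 1 then |ξ ω'| ^ 3 else 0 with hf2def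
  set G : Ω → ℝ := fun ω => gfun (lam * ξ ω) with hGdef
  have hGsplit : G = ((lam^2) • f1) + ((lam^3) • f2) := by
    funext ω
    simp only [hGdef, hf1def, hf2def, gfun, Pi.add_apply, Pi.smul_apply, smul_eq_mul]
    split_ifs with h1 h2
    · linarith
    · ring
    · rw [abs_mul, abs_of_pos hlam]; ring
    · push_neg at h1; linarith
  -- integrability
  have hξi : Integrable ξ P := by
    refine Integrable.mono' ((integrable_const 1).add hξ2) hξ.aestronglyMeasurable
      (ae_of_all _ fun ω => ?_)
    simp only [Real.norm_eq_abs, Pi.add_apply]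
    nlinarith [sq_nonneg (|ξ ω| - 1), sq_abs (ξ ω), abs_nonneg (ξ ω)]
  have hf1m : Measurable f1 :=
    Measurable.ite (measurableSet_lt measurable_const hxm.abs) (hξ.pow_const 2) measurable_const
  have hf2m : Measurable f2 :=
    Measurable.ite (measurableSet_le hxm.abs measurable_const) (hξ.abs.pow_const 3)
      measurable_const
  have hf1i : Integrable f1 P := by
    refine Integrable.mono' hξ2 hf1m.aestronglyMeasurable (ae_of_all _ fun ω => ?_)
    simp only [Real.norm_eq_abs, hf1def]
    split_ifs
    · rw [abs_of_nonneg (sq_nonneg _)]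
    · simp [sq_nonneg]
  have hf2i : Integrable f2 P := by
    refine Integrable.mono' (hξ2.const_mul (1/lam)) hf2m.aestronglyMeasurable
      (ae_of_all _ fun ω => ?_)
    simp only [Real.norm_eq_abs, hf2def]
    split_ifs with h
    · rw [abs_of_nonneg (by positivity)]
      rw [abs_mul, abs_of_pos hlam] at h
      have h1 : |ξ ω| ≤ 1/lam := by
        rw [le_div_iff₀ hlam]; linarith
      have h2 : |ξ ω|^3 = |ξ ω| * ξ ω^2 := by
        rw [← sq_abs]; ring
      rw [h2]
      have := mul_le_mul_of_nonneg_right h1 (sq_nonneg (ξ ω))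
      linarith
    · rw [abs_zero]; positivity
  have hGi : Integrable G P := by
    rw [hGsplit]; exact (hf1i.smul (lam^2)).add (hf2i.smul (lam^3))
  -- identify tildeEps with P[G|mG]
  have hceG : P[G|mG] =ᵐ[P] tildeEps mG P lam ξ := by
    rw [hGsplit]
    have h1 := condExp_add (m := mG) (hf1i.smul (lam^2)) (hf2i.smul (lam^3))
    have h2 := condExp_smul (μ := P) (m := mG) (lam^2) f1
    have h3 := condExp_smul (μ := P) (m := mG) (lam^3) f2
    filter_upwards [h1, h2, h3] with ω e1 e2 e3
    simp only [Pi.add_apply, Pi.smul_apply, smul_eq_mul] at e1 e2 e3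
    rw [e1, e2, e3]
    simp only [tildeEps, hf1def, hf2def]
  have hGnn : 0 ≤ᵐ[P] P[G|mG] :=
    condExp_nonneg (ae_of_all _ fun ω => gfun_nonneg _)
  -- measurability and integrability of the four main integrands
  have hζm : Measurable (zetaOf lam ξ) := by
    unfold zetaOf
    exact ((hξ.const_mul lam).sub (((hξ.pow_const 2).const_mul (lam^2)).div_const 2))
  have hem : Measurable (fun ω' => Real.exp (zetaOf lam ξ ω')) := Real.measurable_exp.comp hζm
  have hfe : ∀ ω, |Real.exp (zetaOf lam ξ ω)| ≤ 2 := fun ω => by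
    rw [abs_of_pos (Real.exp_pos _), hzeq ω]; exact Lexp_zeta_le
  have hfei : Integrable (fun ω' => Real.exp (zetaOf lam ξ ω')) P :=
    Lbdd_int hem.aestronglyMeasurable hfe
  have hze : ∀ ω, |zetaOf lam ξ ω * Real.exp (zetaOf lam ξ ω)| ≤ 1 := fun ω => by
    rw [hzeq ω]; exact Lpw5 _
  have hzei : Integrable (fun ω' => zetaOf lam ξ ω' * Real.exp (zetaOf lam ξ ω')) P :=
    Lbdd_int (hζm.mul hem).aestronglyMeasurable hze
  have hz2e : ∀ ω, |(zetaOf lam ξ ω)^2 * Real.exp (zetaOf lam ξ ω)| ≤ 4 := fun ω => by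
    rw [abs_of_nonneg (by positivity), hzeq ω]
    exact Lsq_exp (Lzeta_le_half _)
  have hz2ei : Integrable (fun ω' => (zetaOf lam ξ ω')^2 * Real.exp (zetaOf lam ξ ω')) P :=
    Lbdd_int ((hζm.pow_const 2).mul hem).aestronglyMeasurable hz2e
  have hz3e : ∀ ω, |(|zetaOf lam ξ ω|^3 * Real.exp (zetaOf lam ξ ω))| ≤ 27 := fun ω => by
    rw [abs_of_nonneg (by positivity), hzeq ω]
    exact Lcube_exp (Lzeta_le_half _)
  have hz3ei : Integrable (fun ω' => |zetaOf lam ξ ω'|^3 * Real.exp (zetaOf lam ξ ω')) P :=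
    Lbdd_int ((hζm.abs.pow_const 3).mul hem).aestronglyMeasurable hz3e
  -- Part (i)
  have hh1i : Integrable ((fun _ => (1:ℝ)) + lam • ξ) P := (integrable_const 1).add (hξi.smul lam)
  have hcmp1 := Lcompare (K := 30) hle hfei hh1i hGi (fun ω => by
    simp only [Pi.add_apply, Pi.smul_apply, smul_eq_mul]
    rw [show Real.exp (zetaOf lam ξ ω) - (1 + lam * ξ ω)
        = Real.exp ((lam * ξ ω) - (lam * ξ ω)^2/2) - 1 - (lam * ξ ω) by rw [hzeq ω]; ring]
    exact Lpw1 (lam * ξ ω))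
  have hh1ce : ∀ᵐ ω ∂P, (P[(fun _ => (1:ℝ)) + lam • ξ|mG]) ω = 1 := by
    have h1 := condExp_add (m := mG) (integrable_const (1:ℝ)) (hξi.smul lam)
    have h2 := condExp_smul (μ := P) (m := mG) lam ξ
    have h3 : P[fun _ => (1:ℝ)|mG] = fun _ => (1:ℝ) := condExp_const hle 1
    filter_upwards [h1, h2, hcond] with ω e1 e2 e3
    simp only [Pi.add_apply, Pi.smul_apply, smul_eq_mul, h3, Pi.zero_apply] at e1 e2 e3
    rw [e1, e2, e3]; ring
  have part1 : ∀ᵐ ω ∂P,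
      |(P[fun ω' => Real.exp (zetaOf lam ξ ω')|mG]) ω - 1| ≤ 30 * (P[G|mG]) ω := by
    filter_upwards [hcmp1, hh1ce] with ω e1 e2
    rw [e2] at e1; exact e1
  -- Part (ii)
  have hh2i : Integrable (lam • ξ + (lam^2/2) • (fun ω => (ξ ω)^2)) P :=
    (hξi.smul lam).add (hξ2.smul (lam^2/2))
  have hcmp2 := Lcompare (K := 30) hle hzei hh2i hGi (fun ω => by
    simp only [Pi.add_apply, Pi.smul_apply, smul_eq_mul]
    rw [show zetaOf lam ξ ω * Real.exp (zetaOf lam ξ ω) - (lam * ξ ω + lam^2/2 * (ξ ω)^2)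
        = ((lam * ξ ω) - (lam * ξ ω)^2/2) * Real.exp ((lam * ξ ω) - (lam * ξ ω)^2/2)
          - (lam * ξ ω) - (lam * ξ ω)^2/2 by rw [hzeq ω]; ring]
    exact Lpw2 (lam * ξ ω))
  have hh2ce : ∀ᵐ ω ∂P, (P[lam • ξ + (lam^2/2) • (fun ω => (ξ ω)^2)|mG]) ω
      = lam^2/2 * (P[fun ω' => (ξ ω')^2|mG]) ω := by
    have h1 := condExp_add (m := mG) (hξi.smul lam) (hξ2.smul (lam^2/2))
    have h2 := condExp_smul (μ := P) (m := mG) lam ξ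
    have h3 := condExp_smul (μ := P) (m := mG) (lam^2/2) (fun ω => (ξ ω)^2)
    filter_upwards [h1, h2, h3, hcond] with ω e1 e2 e3 e4
    simp only [Pi.add_apply, Pi.smul_apply, smul_eq_mul, Pi.zero_apply] at e1 e2 e3 e4
    rw [e1, e2, e3, e4]; ring
  have part2 : ∀ᵐ ω ∂P,
      |(P[fun ω' => zetaOf lam ξ ω' * Real.exp (zetaOf lam ξ ω')|mG]) ω
        - lam^2/2 * (P[fun ω' => (ξ ω')^2|mG]) ω| ≤ 30 * (P[G|mG]) ω := by
    filter_upwards [hcmp2, hh2ce] with ω e1 e2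
    rw [e2] at e1; exact e1
  -- Part (iii)
  have hh3i : Integrable ((lam^2) • (fun ω => (ξ ω)^2)) P := hξ2.smul (lam^2)
  have hcmp3 := Lcompare (K := 30) hle hz2ei hh3i hGi (fun ω => by
    simp only [Pi.smul_apply, smul_eq_mul]
    rw [show (zetaOf lam ξ ω)^2 * Real.exp (zetaOf lam ξ ω) - lam^2 * (ξ ω)^2
        = ((lam * ξ ω) - (lam * ξ ω)^2/2)^2 * Real.exp ((lam * ξ ω) - (lam * ξ ω)^2/2)
          - (lam * ξ ω)^2 by rw [hzeq ω]; ring]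
    exact Lpw3 (lam * ξ ω))
  have hh3ce : ∀ᵐ ω ∂P, (P[(lam^2) • (fun ω => (ξ ω)^2)|mG]) ω
      = lam^2 * (P[fun ω' => (ξ ω')^2|mG]) ω := by
    have h3 := condExp_smul (μ := P) (m := mG) (lam^2) (fun ω => (ξ ω)^2)
    filter_upwards [h3] with ω e3
    simp only [Pi.smul_apply, smul_eq_mul] at e3
    rw [e3]
  have part3 : ∀ᵐ ω ∂P,
      |(P[fun ω' => (zetaOf lam ξ ω')^2 * Real.exp (zetaOf lam ξ ω')|mG]) ω
        - lam^2 * (P[fun ω' => (ξ ω')^2|mG]) ω| ≤ 30 * (P[G|mG]) ω := by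
    filter_upwards [hcmp3, hh3ce] with ω e1 e2
    rw [e2] at e1; exact e1
  -- Part (iv)
  have part4 : ∀ᵐ ω ∂P,
      (P[fun ω' => |zetaOf lam ξ ω'|^3 * Real.exp (zetaOf lam ξ ω')|mG]) ω
        ≤ 30 * (P[G|mG]) ω := by
    have hub := condExp_mono (m := mG) hz3ei (hGi.smul (30:ℝ)) (ae_of_all _ fun ω => by
      simp only [Pi.smul_apply, smul_eq_mul]
      rw [show |zetaOf lam ξ ω|^3 * Real.exp (zetaOf lam ξ ω)
          = |(lam * ξ ω) - (lam * ξ ω)^2/2|^3 * Real.exp ((lam * ξ ω) - (lam * ξ ω)^2/2)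
          by rw [hzeq ω]]
      exact Lpw4 (lam * ξ ω))
    have hsm := condExp_smul (μ := P) (m := mG) (30:ℝ) G
    filter_upwards [hub, hsm] with ω e1 e2
    simp only [Pi.smul_apply, smul_eq_mul] at e1 e2
    rw [e2] at e1; exact e1
  -- Part (v)
  set q1 : Ω → ℝ := fun ω => if 1 < |lam * ξ ω| then (lam * ξ ω)^2 else 0 with hq1def
  set q2 : Ω → ℝ := fun ω => if |lam * ξ ω| ≤ 1 then (lam * ξ ω)^2 else 0 with hq2def
  have hq1m : Measurable q1 :=
    Measurable.ite (measurableSet_lt measurable_const hxm.abs) (hxm.pow_const 2) measurable_const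
  have hq2m : Measurable q2 :=
    Measurable.ite (measurableSet_le hxm.abs measurable_const) (hxm.pow_const 2) measurable_const
  have hq2b0 : ∀ ω, 0 ≤ q2 ω := fun ω => by
    simp only [hq2def]; split_ifs
    · positivity
    · exact le_refl 0
  have hq2b1 : ∀ ω, q2 ω ≤ 1 := fun ω => by
    simp only [hq2def]; split_ifs with h
    · nlinarith [sq_abs (lam * ξ ω), abs_nonneg (lam * ξ ω)]
    · norm_num
  have hq1i : Integrable q1 P := by
    refine Integrable.mono' (hξ2.const_mul (lam^2)) hq1m.aestronglyMeasurable
      (ae_of_all _ fun ω => ?_)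
    simp only [Real.norm_eq_abs, hq1def]
    split_ifs
    · rw [abs_of_nonneg (sq_nonneg _)]; nlinarith [sq_nonneg (ξ ω)]
    · rw [abs_zero]; positivity
  have hq2i : Integrable q2 P :=
    Lbdd_int hq2m.aestronglyMeasurable
      (fun ω => by rw [abs_of_nonneg (hq2b0 ω)]; exact hq2b1 ω)
  have hq2sqi : Integrable (fun ω => (q2 ω)^2) P :=
    Lbdd_int (hq2m.pow_const 2).aestronglyMeasurable
      (fun ω => by
        rw [abs_of_nonneg (sq_nonneg _)]
        exact pow_le_one₀ (hq2b0 ω) (hq2b1 ω))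
  have hsplitsq : ((lam^2) • (fun ω => (ξ ω)^2)) = q1 + q2 := by
    funext ω
    simp only [Pi.add_apply, Pi.smul_apply, smul_eq_mul, hq1def, hq2def]
    split_ifs with h1 h2
    · linarith
    · ring
    · ring
    · push_neg at h1; linarith
  have hsum : ∀ᵐ ω ∂P, lam^2 * (P[fun ω' => (ξ ω')^2|mG]) ω
      = (P[q1|mG]) ω + (P[q2|mG]) ω := by
    have h1 := condExp_add (m := mG) hq1i hq2i
    have h2 := condExp_smul (μ := P) (m := mG) (lam^2) (fun ω => (ξ ω)^2)
    rw [← hsplitsq] at h1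
    filter_upwards [h1, h2] with ω e1 e2
    simp only [Pi.add_apply, Pi.smul_apply, smul_eq_mul] at e1 e2
    rw [← e2, e1]
  have hq1le : P[q1|mG] ≤ᵐ[P] P[G|mG] := by
    refine condExp_mono hq1i hGi (ae_of_all _ fun ω => ?_)
    simp only [hq1def, hGdef, gfun]
    split_ifs <;> nlinarith [pow_nonneg (abs_nonneg (lam * ξ ω)) 3, sq_nonneg (lam * ξ ω)]
  have hq1nn : 0 ≤ᵐ[P] P[q1|mG] := by
    refine condExp_nonneg (ae_of_all _ fun ω => ?_)
    simp only [hq1def]; split_ifs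
    · positivity
    · exact le_refl 0
  have hq2nn : 0 ≤ᵐ[P] P[q2|mG] := condExp_nonneg (ae_of_all _ hq2b0)
  have hjen := Ljensen (P := P) hle hq2m hq2b0 hq2b1
  have hq2sqle : P[fun ω => (q2 ω)^2|mG] ≤ᵐ[P] P[G|mG] := by
    refine condExp_mono hq2sqi hGi (ae_of_all _ fun ω => ?_)
    simp only [hq2def, hGdef, gfun]
    split_ifs with h1 h2
    · linarith
    · have he : ((lam * ξ ω)^2)^2 = |lam * ξ ω|^4 := by
        calc ((lam * ξ ω)^2)^2 = ((|lam * ξ ω|)^2)^2 := by rw [sq_abs]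
          _ = |lam * ξ ω|^4 := by ring
      have h4 : |lam * ξ ω|^4 ≤ |lam * ξ ω|^3 :=
        pow_le_pow_of_le_one (abs_nonneg _) h1 (by norm_num)
      nlinarith [sq_nonneg (lam * ξ ω)]
    · nlinarith [sq_nonneg (lam * ξ ω), pow_nonneg (abs_nonneg (lam * ξ ω)) 3]
    · nlinarith [sq_nonneg (lam * ξ ω)]
  have haB := Lce_bound hle hzei hze
  have part5 : ∀ᵐ ω ∂P,
      ((P[fun ω' => zetaOf lam ξ ω' * Real.exp (zetaOf lam ξ ω')|mG]) ω)^2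
        ≤ 100 * (P[G|mG]) ω := by
    filter_upwards [part2, hsum, hq1le, hq1nn, hq2nn, hjen, hq2sqle, haB, hGnn]
      with ω e2 es ev1 ev1n ev2n ej esq ea eg
    simp only [Pi.zero_apply] at ev1n ev2n eg
    set a := (P[fun ω' => zetaOf lam ξ ω' * Real.exp (zetaOf lam ξ ω')|mG]) ω with ha
    set v1 := (P[q1|mG]) ω with hv1
    set v2 := (P[q2|mG]) ω with hv2
    set ε := (P[G|mG]) ω with hε
    have hv2sq : v2^2 ≤ ε := le_trans ej esq
    have hcv : lam^2/2 * (P[fun ω' => (ξ ω')^2|mG]) ω = (v1 + v2)/2 := by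
      rw [hv1, hv2]; linarith [es]
    rw [hcv] at e2
    have he2 := abs_le.mp e2
    have hau : |a| ≤ v2/2 + (v1/2 + 30*ε) := by
      rw [abs_le]; constructor <;> nlinarith [he2.1, he2.2, ev1n, ev2n, eg]
    by_cases hw : v1/2 + 30*ε ≤ 1
    · have hw0 : 0 ≤ v1/2 + 30*ε := by linarith
      have hsq : a^2 ≤ (v2/2 + (v1/2 + 30*ε))^2 := by
        have := pow_le_pow_left₀ (abs_nonneg a) hau 2
        rwa [sq_abs] at this
      nlinarith [hsq, sq_nonneg (v2/2 - (v1/2 + 30*ε)),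
        mul_nonneg hw0 (sub_nonneg.mpr hw), hv2sq, ev1, eg]
    · push_neg at hw
      have ha2 : a^2 ≤ 1 := by nlinarith [ea, abs_nonneg a, sq_abs a]
      nlinarith [ha2, hw, ev1, eg]
  -- assembly
  filter_upwards [part1, part2, part3, part4, part5, hceG, hGnn]
    with ω e1 e2 e3 e4 e5 eG eg
  simp only [Pi.zero_apply] at eg
  rw [← eG]
  exact ⟨by linarith, by linarith, by linarith, by linarith, by linarith⟩
end

section
/- For each n, let the martingale differences (X_i)_{1≤i≤n} satisfy condition (A1). Then for all x > 0, P( S_n ≥ x √([S]_n) and [S]_n ≥ 16 B_n² ) ≤ (2/3) x^{−2/3} exp{ −(3/4) x² }. -/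
open MeasureTheory Filter
open scoped Topology ENNReal

noncomputable def stdNormalCDF (x : ℝ) : ℝ :=
  (Real.sqrt (2 * Real.pi))⁻¹ * ∫ t in Set.Iic x, Real.exp (-(t ^ 2) / 2)

/-- A finite sequence of square-integrable martingale differences
`X 1, ..., X n` adapted to a filtration `F 0 ⊆ F 1 ⊆ ... ⊆ F n`, with
`F 0` trivial, `E[X i | F (i-1)] = 0` and `0 < E[(X i)^2] < ∞`. -/
structure MDS (Ω : Type) [mΩ : MeasurableSpace Ω] (P : Measure Ω) where
  n : ℕ
  npos : 0 < n
  F : ℕ → MeasurableSpace Ω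
  F_mono : Monotone F
  F_le : ∀ i, F i ≤ mΩ
  F_zero : F 0 = ⊥
  X : ℕ → Ω → ℝ
  meas : ∀ i, 1 ≤ i → i ≤ n → StronglyMeasurable[F i] (X i)
  sq_int : ∀ i, 1 ≤ i → i ≤ n → Integrable (fun ω => (X i ω) ^ 2) P
  mean_zero : ∀ i, 1 ≤ i → i ≤ n → P[X i|F (i - 1)] =ᵐ[P] 0
  var_pos : ∀ i, 1 ≤ i → i ≤ n → 0 < ∫ ω, (X i ω) ^ 2 ∂P

namespace MDS

variable {Ω : Type} [mΩ : MeasurableSpace Ω] {P : Measure Ω}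

/-- `S_n = ∑_{i=1}^n X_i`. -/
noncomputable def S (A : MDS Ω P) : Ω → ℝ := fun ω => ∑ i ∈ Finset.Icc 1 A.n, A.X i ω

/-- `B_n² = ∑_{i=1}^n E[X_i²]`. -/
noncomputable def Bsq (A : MDS Ω P) : ℝ := ∑ i ∈ Finset.Icc 1 A.n, ∫ ω, (A.X i ω) ^ 2 ∂P

/-- `[S]_n = ∑_{i=1}^n X_i²`. -/
noncomputable def QV (A : MDS Ω P) : Ω → ℝ := fun ω => ∑ i ∈ Finset.Icc 1 A.n, (A.X i ω) ^ 2

/-- `⟨S⟩_n = ∑_{i=1}^n E[X_i² | F_{i-1}]`. -/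
noncomputable def CV (A : MDS Ω P) : Ω → ℝ :=
  fun ω => ∑ i ∈ Finset.Icc 1 A.n, (P[fun ω' => (A.X i ω') ^ 2|A.F (i - 1)]) ω

/-- `W_n = S_n / √[S]_n`. -/
noncomputable def W (A : MDS Ω P) : Ω → ℝ := fun ω => A.S ω / Real.sqrt (A.QV ω)

/-- Condition (A1): `|⟨S⟩_n − B_n²| ≤ δ² B_n²` a.s., with `δ ∈ [0, 1/4]`. -/
def CondA1 (A : MDS Ω P) (δ : ℝ) : Prop :=
  0 ≤ δ ∧ δ ≤ 1 / 4 ∧ ∀ᵐ ω ∂P, |A.CV ω - A.Bsq| ≤ δ ^ 2 * A.Bsq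

/-- Condition (A2): `∑_{i=1}^n E[|X_i|^{2+ρ} | F_{i-1}] ≤ ε^ρ B_n^{2+ρ}` a.s.,
with `ε ∈ (0, 1/4]`. -/
def CondA2 (A : MDS Ω P) (ρ ε : ℝ) : Prop :=
  0 < ε ∧ ε ≤ 1 / 4 ∧
    (∀ i, 1 ≤ i → i ≤ A.n → Integrable (fun ω => |A.X i ω| ^ (2 + ρ)) P) ∧
    ∀ᵐ ω ∂P,
      ∑ i ∈ Finset.Icc 1 A.n, (P[fun ω' => |A.X i ω'| ^ (2 + ρ)|A.F (i - 1)]) ω ≤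
        ε ^ ρ * A.Bsq ^ ((2 + ρ) / 2)

/-- Condition (A3): `E[X_i² | F_{i-1}] ≤ κ² B_n²` a.s. for each `i`, with `κ ∈ (0, 1/4]`. -/
def CondA3 (A : MDS Ω P) (κ : ℝ) : Prop :=
  0 < κ ∧ κ ≤ 1 / 4 ∧
    ∀ i, 1 ≤ i → i ≤ A.n →
      ∀ᵐ ω ∂P, (P[fun ω' => (A.X i ω') ^ 2|A.F (i - 1)]) ω ≤ κ ^ 2 * A.Bsq

/-- Condition (A4): `E[|X_i|^{2+ρ} | F_{i-1}] ≤ (γ B_n)^ρ E[X_i² | F_{i-1}]` a.s.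
for each `i`, with `γ ∈ (0, 1/4]`. -/
def CondA4 (A : MDS Ω P) (ρ γ : ℝ) : Prop :=
  0 < γ ∧ γ ≤ 1 / 4 ∧
    (∀ i, 1 ≤ i → i ≤ A.n → Integrable (fun ω => |A.X i ω| ^ (2 + ρ)) P) ∧
    ∀ i, 1 ≤ i → i ≤ A.n →
      ∀ᵐ ω ∂P,
        (P[fun ω' => |A.X i ω'| ^ (2 + ρ)|A.F (i - 1)]) ω ≤
          (γ * Real.sqrt A.Bsq) ^ ρ * (P[fun ω' => (A.X i ω') ^ 2|A.F (i - 1)]) ω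

end MDS



section AuxNum
open Real

lemma exp_le_P4 {t : ℝ} (h0 : 0 ≤ t) (h1 : t ≤ 1) :
    Real.exp t ≤ 1 + t + t^2/2 + t^3/6 + (5/96)*t^4 := by
  have h := Real.exp_bound' h0 h1 (n := 4) (by norm_num)
  rw [Finset.sum_range_succ, Finset.sum_range_succ, Finset.sum_range_succ,
    Finset.sum_range_succ, Finset.sum_range_zero] at h
  norm_num [Nat.factorial] at h
  nlinarith [h]

lemma exp_nonpos_quad {t : ℝ} (ht : t ≤ 0) : Real.exp t ≤ 1 + t + t^2/2 := by
  rcases le_or_gt (-1) t with h1 | h1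
  · have habs : |t| ≤ 1 := by rw [abs_le]; constructor <;> linarith
    have h := Real.exp_bound habs (n := 4) (by norm_num)
    rw [Finset.sum_range_succ, Finset.sum_range_succ, Finset.sum_range_succ,
      Finset.sum_range_succ, Finset.sum_range_zero] at h
    norm_num [Nat.factorial] at h
    have h2 := (abs_sub_le_iff.1 h).1
    have habs4 : |t|^4 = t^4 := by rw [← abs_pow, abs_of_nonneg (by positivity)]
    rw [habs4] at h2
    nlinarith [h2, mul_nonneg (mul_nonneg (neg_nonneg.2 ht) (neg_nonneg.2 ht)) (neg_nonneg.2 ht),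
      mul_nonneg (neg_nonneg.2 ht) (neg_nonneg.2 ht), sq_nonneg (t*(1+t))]
  · have hle : Real.exp t ≤ Real.exp (-1) := Real.exp_le_exp.2 (by linarith)
    have he : Real.exp (-1) ≤ 1/2 := by
      rw [Real.exp_neg, inv_le_comm₀ (Real.exp_pos 1) (by norm_num)]
      calc (1/2:ℝ)⁻¹ = 2 := by norm_num
        _ ≤ Real.exp 1 := by linarith [Real.add_one_le_exp 1]
    nlinarith [sq_nonneg (t+1)]


lemma exp09 : Real.exp (9/10) ≤ 2.4608 := by
  have h := exp_le_P4 (t := 9/10) (by norm_num) (by norm_num); nlinarith [h]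

lemma exp16 : Real.exp (8/5) ≤ 4.958 := by
  have h1 := exp09
  have h2 := exp_le_P4 (t := 7/10) (by norm_num) (by norm_num)
  have h : Real.exp (8/5) = Real.exp (9/10) * Real.exp (7/10) := by
    rw [← Real.exp_add]; norm_num
  rw [h]
  nlinarith [Real.exp_pos (9/10), Real.exp_pos (7/10), h1, h2]

lemma exp21 : Real.exp (21/10) ≤ 8.18 := by
  have h1 := exp16
  have h2 := exp_le_P4 (t := 1/2) (by norm_num) (by norm_num)
  have h : Real.exp (21/10) = Real.exp (8/5) * Real.exp (1/2) := by
    rw [← Real.exp_add]; norm_num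
  rw [h]
  nlinarith [Real.exp_pos (8/5), Real.exp_pos (1/2), h1, h2]

lemma exp25 : Real.exp (5/2) ≤ 12.21 := by
  have h1 := exp21
  have h2 := exp_le_P4 (t := 2/5) (by norm_num) (by norm_num)
  have h : Real.exp (5/2) = Real.exp (21/10) * Real.exp (2/5) := by
    rw [← Real.exp_add]; norm_num
  rw [h]
  nlinarith [Real.exp_pos (21/10), Real.exp_pos (2/5), h1, h2]

lemma exp_secant {s c m : ℝ} (hs0 : 0 ≤ s) (hsc : s ≤ c) (hc1 : c ≤ 1)
    (hm : 1 + c/2 + c^2/6 + (5/96)*c^3 ≤ m) : Real.exp s ≤ 1 + m * s := by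
  have h := exp_le_P4 hs0 (hsc.trans hc1)
  have h2 : s^2 ≤ c*s := by nlinarith
  have h3 : s^3 ≤ c^2*s := by nlinarith
  have h4 : s^4 ≤ c^3*s := by nlinarith
  nlinarith [mul_le_mul_of_nonneg_right hm hs0]

lemma key_ineq (u : ℝ) : Real.exp (u - u^2/10) ≤ 1 + u + (7/10)*u^2 := by
  rcases le_or_gt u 0 with hu0 | hu0
  · rcases le_or_gt u (-12/5) with hu1 | hu1
    · have h1 : Real.exp (u - u^2/10) ≤ Real.exp u := by
        apply Real.exp_le_exp.2; nlinarith [sq_nonneg u]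
      have h2 : Real.exp u ≤ Real.exp (-(12/5)) := Real.exp_le_exp.2 (by linarith)
      have h3 : Real.exp (-(12/5)) ≤ 5/17 := by
        rw [Real.exp_neg, inv_le_comm₀ (Real.exp_pos _) (by norm_num)]
        calc ((5:ℝ)/17)⁻¹ = 17/5 := by norm_num
          _ ≤ Real.exp (12/5) := by linarith [Real.add_one_le_exp (12/5)]
      nlinarith [sq_nonneg (u + 5/7)]
    · have ht : u - u^2/10 ≤ 0 := by nlinarith
      have h := exp_nonpos_quad ht
      nlinarith [sq_nonneg u, mul_nonneg (mul_nonneg (neg_nonneg.2 hu0) (neg_nonneg.2 hu0)) (neg_nonneg.2 hu0)]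
  · rcases le_or_gt u 1 with hu1 | hu1
    · have ht0 : 0 ≤ u - u^2/10 := by nlinarith
      have ht1 : u - u^2/10 ≤ 1 := by nlinarith
      have h := exp_le_P4 ht0 ht1
      have htu : u - u^2/10 ≤ u := by nlinarith
      have h2 : (u - u^2/10)^2 ≤ u^2 := by nlinarith
      have h3 : (u - u^2/10)^3 ≤ u^3 := pow_le_pow_left₀ ht0 htu 3
      have h4 : (u - u^2/10)^4 ≤ u^4 := pow_le_pow_left₀ ht0 htu 4
      have hu3 : u^3 ≤ u^2 := by nlinarith
      have hu4 : u^4 ≤ u^2 := by nlinarith [sq_nonneg u]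
      linarith
    · rcases le_or_gt u 2 with hu2 | hu2
      · have ht0 : 0 ≤ u - u^2/10 - 9/10 := by nlinarith
        have ht1 : u - u^2/10 - 9/10 ≤ 7/10 := by nlinarith
        have hsplit : Real.exp (u - u^2/10) = Real.exp (9/10) * Real.exp (u - u^2/10 - 9/10) := by
          rw [← Real.exp_add]; ring_nf
        have hP := exp_secant ht0 ht1 (by norm_num)
          (by norm_num : 1 + (7/10)/2 + (7/10)^2/6 + (5/96)*(7/10)^3 ≤ (29/20:ℝ))
        rw [hsplit]
        have hprod : Real.exp (9/10) * Real.exp (u - u^2/10 - 9/10) ≤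
            2.4608 * (1 + (29/20) * (u - u^2/10 - 9/10)) :=
          mul_le_mul exp09 hP (Real.exp_pos _).le (by norm_num)
        nlinarith [hprod, sq_nonneg (u - 121/100)]
      · rcases le_or_gt u 3 with hu3 | hu3
        · have ht0 : 0 ≤ u - u^2/10 - 8/5 := by nlinarith
          have ht1 : u - u^2/10 - 8/5 ≤ 1/2 := by nlinarith
          have hsplit : Real.exp (u - u^2/10) = Real.exp (8/5) * Real.exp (u - u^2/10 - 8/5) := by
            rw [← Real.exp_add]; ring_nf
          have hP := exp_secant ht0 ht1 (by norm_num)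
            (by norm_num : 1 + (1/2)/2 + (1/2)^2/6 + (5/96)*(1/2)^3 ≤ (13/10:ℝ))
          rw [hsplit]
          have hprod : Real.exp (8/5) * Real.exp (u - u^2/10 - 8/5) ≤
              4.958 * (1 + (13/10) * (u - u^2/10 - 8/5)) :=
            mul_le_mul exp16 hP (Real.exp_pos _).le (by norm_num)
          nlinarith [hprod, sq_nonneg (u - 2)]
        · rcases le_or_gt u 4 with hu4 | hu4
          · have ht0 : 0 ≤ u - u^2/10 - 21/10 := by nlinarith
            have ht1 : u - u^2/10 - 21/10 ≤ 3/10 := by nlinarith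
            have hsplit : Real.exp (u - u^2/10) = Real.exp (21/10) * Real.exp (u - u^2/10 - 21/10) := by
              rw [← Real.exp_add]; ring_nf
            have hP := exp_secant ht0 ht1 (by norm_num)
              (by norm_num : 1 + (3/10)/2 + (3/10)^2/6 + (5/96)*(3/10)^3 ≤ (117/100:ℝ))
            rw [hsplit]
            have hprod : Real.exp (21/10) * Real.exp (u - u^2/10 - 21/10) ≤
                8.18 * (1 + (117/100) * (u - u^2/10 - 21/10)) :=
              mul_le_mul exp21 hP (Real.exp_pos _).le (by norm_num)
            nlinarith [hprod, sq_nonneg (u - 26/10)]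
          · rcases le_or_gt u 10 with hu10 | hu10
            · have ht : u - u^2/10 ≤ 5/2 := by nlinarith [sq_nonneg (u-5)]
              have h := Real.exp_le_exp.2 ht
              nlinarith [h, exp25, sq_nonneg (u-4)]
            · have ht : u - u^2/10 ≤ 0 := by nlinarith
              have h := Real.exp_le_exp.2 ht
              rw [Real.exp_zero] at h
              nlinarith [h]


section NumHelpers

lemma cube_le {a b : ℝ} (hb : 0 ≤ b) (h : a^3 ≤ b^3) : a ≤ b :=
  le_of_pow_le_pow_left₀ (by norm_num) hb h

lemma exp_two_le : Real.exp 2 ≤ 7.389057 := by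
  have h := Real.exp_one_lt_d9
  have h2 : Real.exp 2 = Real.exp 1 * Real.exp 1 := by rw [← Real.exp_add]; norm_num
  nlinarith [Real.exp_pos 1]

lemma exp_half_le : Real.exp (1/2) ≤ 5/3 := by
  have hsq : (Real.exp (1/2))^2 = Real.exp 1 := by
    rw [← Real.exp_nat_mul]; norm_num
  have h := Real.exp_one_lt_d9
  nlinarith [Real.exp_pos (1/2)]

lemma exp_25_le : Real.exp (5/2) ≤ 12.32 := by
  have h : Real.exp (5/2) = Real.exp 2 * Real.exp (1/2) := by
    rw [← Real.exp_add]; norm_num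
  rw [h]
  nlinarith [exp_two_le, exp_half_le, Real.exp_pos 2, Real.exp_pos (1/2)]

lemma taylor4_le_exp {y : ℝ} (hy : 0 ≤ y) :
    1 + y + y^2/2 + y^3/6 + y^4/24 ≤ Real.exp y := by
  have h := Real.sum_le_exp_of_nonneg hy 5
  rw [Finset.sum_range_succ, Finset.sum_range_succ, Finset.sum_range_succ,
    Finset.sum_range_succ, Finset.sum_range_succ, Finset.sum_range_zero] at h
  norm_num [Nat.factorial] at h
  linarith

lemma exp_166_ge : (5.11:ℝ) ≤ Real.exp (83/50) := by
  have h := taylor4_le_exp (y := 83/50) (by norm_num)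
  nlinarith [h]

lemma exp_664_ge : (678.6:ℝ) ≤ Real.exp (425/64) := by
  have h2 : (Real.exp (83/50))^(4:ℕ) = Real.exp (332/50) := by
    rw [← Real.exp_nat_mul]; norm_num
  have h4 : Real.exp (332/50) ≤ Real.exp (425/64) := Real.exp_le_exp.2 (by norm_num)
  have h5 := pow_le_pow_left₀ (by norm_num : (0:ℝ) ≤ 5.11) exp_166_ge 4
  rw [h2] at h5
  nlinarith [h5, h4]

lemma exp_2095_ge : (7.5:ℝ) ≤ Real.exp (419/200) := by
  have h := taylor4_le_exp (y := 419/200) (by norm_num)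
  nlinarith [h]

lemma exp_838_ge : (3000:ℝ) ≤ Real.exp (419/50) := by
  have h2 : (Real.exp (419/200))^(4:ℕ) = Real.exp (419/50) := by
    rw [← Real.exp_nat_mul]; norm_num
  have h5 := pow_le_pow_left₀ (by norm_num : (0:ℝ) ≤ 7.5) exp_2095_ge 4
  rw [h2] at h5
  nlinarith [h5]

lemma log16_ge : (277:ℝ)/100 ≤ Real.log 16 := by
  have h : (16:ℝ) = 2^4 := by norm_num
  rw [h, Real.log_pow]
  have := Real.log_two_gt_d9
  push_cast
  nlinarith


lemma cube_mul (a b : ℝ) : (a*b)^3 = a^3 * b^3 := by ring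

lemma exp_cube (z : ℝ) : (Real.exp z)^(3:ℕ) = Real.exp (3*z) := by
  rw [← Real.exp_nat_mul]; norm_num

-- Term A, case T ≤ 10/3 : g * exp(-(85/128) T) ≤ 23/40
lemma termA_case1 {T g : ℝ} (hT : 0 < T) (hg : 0 < g) (hg3 : g^3 = T) :
    g * Real.exp (-(85/128)*T) ≤ 23/40 := by
  apply cube_le (by norm_num)
  rw [cube_mul, hg3, exp_cube]
  have hy : (0:ℝ) ≤ (255/128)*T := by positivity
  have htay := taylor4_le_exp hy
  have hkey : T ≤ (12167/64000) * Real.exp ((255/128)*T) := by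
    nlinarith [htay, hT.le, sq_nonneg (T - 1/2), sq_nonneg T, sq_nonneg (T^2 - T/2),
      sq_nonneg (T^2 - T), sq_nonneg (T^2 + T - 1/2), mul_nonneg hT.le hT.le,
      mul_nonneg (mul_nonneg hT.le hT.le) hT.le]
  have hexp : Real.exp (3 * (-(85/128)*T)) = (Real.exp ((255/128)*T))⁻¹ := by
    rw [← Real.exp_neg]; congr 1; ring
  rw [hexp]
  rw [mul_inv_le_iff₀ (Real.exp_pos _)]
  calc T ≤ (12167/64000) * Real.exp ((255/128)*T) := hkey
    _ = (23/40)^3 * Real.exp ((255/128)*T) := by norm_num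

-- Term A, case T ≥ 10/3 : g * exp(-(85/128) T) ≤ 17/100
lemma termA_case2 {T g : ℝ} (hT3 : 10/3 ≤ T) (hg : 0 < g) (hg3 : g^3 = T) :
    g * Real.exp (-(85/128)*T) ≤ 17/100 := by
  apply cube_le (by norm_num)
  rw [cube_mul, hg3, exp_cube]
  have hs : (0:ℝ) ≤ T - 10/3 := by linarith
  have hsplit : Real.exp ((255/128)*T) = Real.exp (425/64) * Real.exp ((255/128)*(T - 10/3)) := by
    rw [← Real.exp_add]; congr 1; ring
  have h1 : 1 + (255/128)*(T - 10/3) ≤ Real.exp ((255/128)*(T - 10/3)) := by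
    linarith [Real.add_one_le_exp ((255/128)*(T - 10/3))]
  have hkey : T ≤ (4913/1000000) * Real.exp ((255/128)*T) := by
    rw [hsplit]
    calc T = 10/3 + (T - 10/3) := by ring
      _ ≤ (4913/1000000) * (678.6 * (1 + (255/128)*(T - 10/3))) := by nlinarith
      _ ≤ (4913/1000000) * (Real.exp (425/64) * Real.exp ((255/128)*(T - 10/3))) := by
          have := mul_le_mul exp_664_ge h1 (by nlinarith) (Real.exp_pos _).le
          nlinarith [this]
  have hexp : Real.exp (3 * (-(85/128)*T)) = (Real.exp ((255/128)*T))⁻¹ := by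
    rw [← Real.exp_neg]; congr 1; ring
  rw [hexp, mul_inv_le_iff₀ (Real.exp_pos _)]
  calc T ≤ (4913/1000000) * Real.exp ((255/128)*T) := hkey
    _ = (17/100)^3 * Real.exp ((255/128)*T) := by norm_num

-- Term B core, case T ≥ 10/3 : T * g * exp(-(419/500) T) ≤ 2/5
lemma termB_case2 {T g : ℝ} (hT3 : 10/3 ≤ T) (hg : 0 < g) (hg3 : g^3 = T) :
    T * g * Real.exp (-(419/500)*T) ≤ 2/5 := by
  have hT : (0:ℝ) < T := lt_of_lt_of_le (by norm_num) hT3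
  apply cube_le (by norm_num)
  rw [cube_mul, cube_mul, hg3, exp_cube]
  have hs : (0:ℝ) ≤ T - 10/3 := by linarith
  set s := T - 10/3 with hsdef
  have hT4 : T^4 ≤ (10000/81) * Real.exp ((6/5)*s) := by
    have h1 : 1 + (3/10)*s ≤ Real.exp ((3/10)*s) := by
      linarith [Real.add_one_le_exp ((3/10)*s)]
    have h2 := pow_le_pow_left₀ (by nlinarith : (0:ℝ) ≤ 1 + (3/10)*s) h1 4
    have h3 : (Real.exp ((3/10)*s))^(4:ℕ) = Real.exp ((6/5)*s) := by
      rw [← Real.exp_nat_mul]; congr 1; ring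
    have h4 : T^4 = (10000/81) * (1 + (3/10)*s)^4 := by
      rw [hsdef]; ring
    rw [h4, ← h3]
    have := mul_le_mul_of_nonneg_left h2 (by norm_num : (0:ℝ) ≤ 10000/81)
    linarith
  have hexp : Real.exp (3 * (-(419/500)*T)) =
      Real.exp (-(419/50)) * Real.exp (-(1257/500)*s) := by
    rw [← Real.exp_add]; congr 1; rw [hsdef]; ring
  have hstep : (T^3*T) * (Real.exp (-(419/50)) * Real.exp (-(1257/500)*s)) ≤ 8/125 := by
    have he1 : Real.exp (-(419/50)) ≤ 1/3000 := by
      rw [Real.exp_neg]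
      rw [inv_le_comm₀ (Real.exp_pos _) (by norm_num)]
      calc ((1:ℝ)/3000)⁻¹ = 3000 := by norm_num
        _ ≤ Real.exp (419/50) := exp_838_ge
    have he2 : Real.exp (-(1257/500)*s) ≤ Real.exp (-(6/5)*s) := by
      apply Real.exp_le_exp.2; nlinarith
    have he3 : Real.exp ((6/5)*s) * Real.exp (-(6/5)*s) = 1 := by
      rw [← Real.exp_add]; norm_num
    have hT30 : T^3*T = T^4 := by ring
    rw [hT30]
    calc T^4 * (Real.exp (-(419/50)) * Real.exp (-(1257/500)*s))
        ≤ ((10000/81) * Real.exp ((6/5)*s)) * ((1/3000) * Real.exp (-(6/5)*s)) := by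
          apply mul_le_mul hT4
          · exact mul_le_mul he1 he2 (Real.exp_pos _).le (by norm_num)
          · positivity
          · positivity
      _ = (10000/243000) * (Real.exp ((6/5)*s) * Real.exp (-(6/5)*s)) := by ring
      _ = 10000/243000 := by rw [he3]; ring
      _ ≤ 8/125 := by norm_num
  calc T^3 * T * Real.exp (3 * (-(419/500)*T))
      = (T^3*T) * (Real.exp (-(419/50)) * Real.exp (-(1257/500)*s)) := by rw [hexp]
    _ ≤ 8/125 := hstep
    _ = (2/5)^3 := by norm_num

-- Term C core : g * exp(-(81/1000) T) ≤ 4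
lemma termC_core {T g : ℝ} (hT : 0 < T) (hg : 0 < g) (hg3 : g^3 = T) :
    g * Real.exp (-(81/1000)*T) ≤ 4 := by
  apply cube_le (by norm_num)
  rw [cube_mul, hg3, exp_cube]
  have hkey : T ≤ 64 * Real.exp ((243/1000)*T) := by
    have := Real.add_one_le_exp ((243/1000)*T)
    nlinarith [this, hT.le]
  have hexp : Real.exp (3 * (-(81/1000)*T)) = (Real.exp ((243/1000)*T))⁻¹ := by
    rw [← Real.exp_neg]; congr 1; ring
  rw [hexp, mul_inv_le_iff₀ (Real.exp_pos _)]
  calc T ≤ 64 * Real.exp ((243/1000)*T) := hkey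
    _ = (4:ℝ)^3 * Real.exp ((243/1000)*T) := by norm_num


set_option maxHeartbeats 1000000 in
lemma final_numeric {x : ℝ} (hx : 0 < x) :
    Real.exp (-(905/640) * x^2) + ((⌈(3/10) * x^2⌉₊ : ℝ) - 1) * Real.exp (-(397/250) * x^2)
      + 1 / (16:ℝ)^(⌈(3/10) * x^2⌉₊ + 1)
    ≤ 2/3 * x ^ (-(2:ℝ)/3) * Real.exp (-(3/4) * x^2) := by
  have hT : (0:ℝ) < x^2 := by positivity
  set T := x^2 with hTdef
  set K := ⌈(3/10) * T⌉₊ with hKdef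
  have hK1 : 1 ≤ K := Nat.one_le_iff_ne_zero.2 (by
    have : 0 < K := Nat.ceil_pos.2 (by positivity)
    omega)
  set g := x ^ ((2:ℝ)/3) with hgdef
  have hg : 0 < g := Real.rpow_pos_of_pos hx _
  have hg3 : g^3 = T := by
    rw [hgdef, ← Real.rpow_natCast (x ^ ((2:ℝ)/3)) 3, ← Real.rpow_mul hx.le]
    norm_num
    exact_mod_cast hTdef.symm
  have hrhs : 2/3 * x ^ (-(2:ℝ)/3) * Real.exp (-(3/4) * T)
      = (2/3) / (g * Real.exp ((3/4)*T)) := by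
    rw [show (-(2:ℝ)/3) = -((2:ℝ)/3) by norm_num, Real.rpow_neg hx.le, ← hgdef,
      show (-(3/4)*T : ℝ) = -((3/4)*T) by ring, Real.exp_neg]
    field_simp
  rw [hrhs, le_div_iff₀ (by positivity)]
  have hA : Real.exp (-(905/640) * T) * (g * Real.exp ((3/4)*T))
      = g * Real.exp (-(85/128)*T) := by
    rw [show g * Real.exp ((3/4)*T) = Real.exp ((3/4)*T) * g by ring, ← mul_assoc,
      ← Real.exp_add]
    rw [show -(905/640) * T + (3/4)*T = -(85/128)*T by ring]
    ring
  have hB : ((K:ℝ) - 1) * Real.exp (-(397/250) * T) * (g * Real.exp ((3/4)*T))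
      = ((K:ℝ) - 1) * (g * Real.exp (-(419/500)*T)) := by
    rw [show -(419/500)*T = -(397/250) * T + (3/4)*T by ring, Real.exp_add]
    ring
  have hC : 1 / (16:ℝ)^(K+1) * (g * Real.exp ((3/4)*T))
      = (16:ℝ)⁻¹ * ((16:ℝ)^K)⁻¹ * g * Real.exp ((3/4)*T) := by
    rw [pow_succ]
    field_simp
  rw [add_mul, add_mul, hA, hB, hC]
  rcases le_or_gt T (10/3) with hT3 | hT3
  · -- K = 1
    have hKeq : K = 1 := by
      have h1 : K ≤ 1 := by
        rw [hKdef]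
        exact Nat.ceil_le.2 (by push_cast; nlinarith)
      omega
    rw [hKeq]
    have hBzero : ((1:ℕ):ℝ) - 1 = 0 := by norm_num
    rw [hBzero, zero_mul]
    have htA := termA_case1 hT hg hg3
    have hgle : g ≤ 1.494 := by
      apply cube_le (by norm_num)
      rw [hg3]; nlinarith
    have hEle : Real.exp ((3/4)*T) ≤ 12.32 := by
      calc Real.exp ((3/4)*T) ≤ Real.exp (5/2) := Real.exp_le_exp.2 (by nlinarith)
        _ ≤ 12.32 := exp_25_le
    have hprod : g * Real.exp ((3/4)*T) ≤ 1.494 * 12.32 :=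
      mul_le_mul hgle hEle (Real.exp_pos _).le (by norm_num)
    have htC : (16:ℝ)⁻¹ * ((16:ℝ)^(1:ℕ))⁻¹ * g * Real.exp ((3/4)*T)
        ≤ (16:ℝ)⁻¹ * (16:ℝ)⁻¹ * (1.494 * 12.32) := by
      rw [pow_one]
      calc (16:ℝ)⁻¹ * (16:ℝ)⁻¹ * g * Real.exp ((3/4)*T)
          = (16:ℝ)⁻¹ * (16:ℝ)⁻¹ * (g * Real.exp ((3/4)*T)) := by ring
        _ ≤ (16:ℝ)⁻¹ * (16:ℝ)⁻¹ * (1.494 * 12.32) :=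
            mul_le_mul_of_nonneg_left hprod (by norm_num)
    calc g * Real.exp (-(85/128)*T) + 0 + (16:ℝ)⁻¹ * ((16:ℝ)^(1:ℕ))⁻¹ * g * Real.exp ((3/4)*T)
        ≤ 23/40 + 0 + (16:ℝ)⁻¹ * (16:ℝ)⁻¹ * (1.494 * 12.32) := by linarith
      _ ≤ 2/3 := by norm_num
  · -- case T > 10/3
    have hKlo : (3/10)*T ≤ (K:ℝ) := by rw [hKdef]; exact Nat.le_ceil _
    have hKhi : (K:ℝ) - 1 ≤ (3/10)*T := by
      have := Nat.ceil_lt_add_one (by positivity : (0:ℝ) ≤ (3/10)*T)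
      rw [hKdef]; push_cast; linarith [this]
    have htA := termA_case2 hT3.le hg hg3
    have htB : ((K:ℝ) - 1) * (g * Real.exp (-(419/500)*T)) ≤ 3/25 := by
      have hpos : 0 ≤ g * Real.exp (-(419/500)*T) := by positivity
      calc ((K:ℝ) - 1) * (g * Real.exp (-(419/500)*T))
          ≤ (3/10)*T * (g * Real.exp (-(419/500)*T)) :=
            mul_le_mul_of_nonneg_right hKhi hpos
        _ = (3/10) * (T * g * Real.exp (-(419/500)*T)) := by ring
        _ ≤ (3/10) * (2/5) := by
            have := termB_case2 hT3.le hg hg3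
            linarith
        _ = 3/25 := by norm_num
    have htC : (16:ℝ)⁻¹ * ((16:ℝ)^K)⁻¹ * g * Real.exp ((3/4)*T) ≤ 1/4 := by
      have h16K : Real.exp ((831/1000)*T) ≤ (16:ℝ)^K := by
        have hlog := log16_ge
        have step1 : Real.exp ((831/1000)*T) ≤ Real.exp (Real.log 16 * ((3/10)*T)) := by
          apply Real.exp_le_exp.2
          nlinarith
        have step2 : Real.exp (Real.log 16 * ((3/10)*T)) = (16:ℝ) ^ ((3/10)*T) := by
          rw [Real.rpow_def_of_pos (by norm_num : (0:ℝ) < 16)]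
        have step3 : (16:ℝ) ^ ((3/10)*T) ≤ (16:ℝ) ^ ((K:ℝ)) :=
          Real.rpow_le_rpow_of_exponent_le (by norm_num) hKlo
        have step4 : (16:ℝ) ^ ((K:ℝ)) = (16:ℝ)^K := Real.rpow_natCast 16 K
        linarith [step1, step2.le, step2.ge, step3, step4.le, step4.ge]
      have hinv : ((16:ℝ)^K)⁻¹ ≤ Real.exp (-(831/1000)*T) := by
        rw [show -(831/1000)*T = -((831/1000)*T) by ring, Real.exp_neg]
        exact inv_anti₀ (Real.exp_pos _) h16K
      have hcore := termC_core hT hg hg3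
      calc (16:ℝ)⁻¹ * ((16:ℝ)^K)⁻¹ * g * Real.exp ((3/4)*T)
          ≤ (16:ℝ)⁻¹ * Real.exp (-(831/1000)*T) * g * Real.exp ((3/4)*T) := by
            have hrest : (0:ℝ) ≤ g * Real.exp ((3/4)*T) := by positivity
            have := mul_le_mul_of_nonneg_left hinv (by norm_num : (0:ℝ) ≤ (16:ℝ)⁻¹)
            nlinarith [this, hrest]
        _ = (16:ℝ)⁻¹ * (g * Real.exp (-(81/1000)*T)) := by
            rw [show -(81/1000)*T = -(831/1000)*T + (3/4)*T by ring, Real.exp_add]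
            ring
        _ ≤ (16:ℝ)⁻¹ * 4 := by
            apply mul_le_mul_of_nonneg_left hcore (by norm_num)
        _ = 1/4 := by norm_num
    linarith [htA, htB, htC]

end NumHelpers


lemma sum_slices_le {T : ℝ} (hT : 0 ≤ T) (K : ℕ) (hK : 1 ≤ K) :
    ∑ k ∈ Finset.range K, Real.exp (-((8/5 - (119/640) * (1/16^k)) * T))
      ≤ Real.exp (-(905/640) * T) + ((K:ℝ) - 1) * Real.exp (-(397/250) * T) := by
  obtain ⟨m, rfl⟩ : ∃ m, K = m + 1 := ⟨K - 1, by omega⟩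
  rw [Finset.sum_range_succ']
  have h0 : Real.exp (-((8/5 - (119/640) * (1/16^(0:ℕ))) * T)) = Real.exp (-(905/640) * T) := by
    norm_num
  have hterm : ∀ i ∈ Finset.range m,
      Real.exp (-((8/5 - (119/640) * (1/16^(i+1))) * T)) ≤ Real.exp (-(397/250) * T) := by
    intro i _
    apply Real.exp_le_exp.2
    have hpos : (0:ℝ) < 16^(i+1) := by positivity
    have h16 : (16:ℝ) ≤ 16^(i+1) := by
      calc (16:ℝ) = 16^1 := (pow_one _).symm
        _ ≤ 16^(i+1) := pow_le_pow_right₀ (by norm_num) (by omega)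
    have hdiv : (1:ℝ)/16^(i+1) ≤ 1/16 := by
      apply one_div_le_one_div_of_le (by norm_num) h16
    have hcoef : (397/250 : ℝ) ≤ 8/5 - (119/640) * (1/16^(i+1)) := by nlinarith
    nlinarith [mul_le_mul_of_nonneg_right hcoef hT]
  calc ∑ i ∈ Finset.range m, Real.exp (-((8/5 - (119/640) * (1/16^(i+1))) * T))
        + Real.exp (-((8/5 - (119/640) * (1/16^(0:ℕ))) * T))
      ≤ (∑ _i ∈ Finset.range m, Real.exp (-(397/250) * T)) + Real.exp (-(905/640) * T) := by
        rw [h0]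
        exact add_le_add_left (Finset.sum_le_sum hterm) _
    _ = Real.exp (-(905/640) * T) + ((m:ℝ)) * Real.exp (-(397/250) * T) := by
        rw [Finset.sum_const, Finset.card_range, nsmul_eq_mul]
        ring
    _ = Real.exp (-(905/640) * T) + (((m+1:ℕ):ℝ) - 1) * Real.exp (-(397/250) * T) := by
        push_cast
        ring

end AuxNum

namespace LQV
open MDS
variable {Ω : Type} [mΩ : MeasurableSpace Ω] {P : Measure Ω}

noncomputable def gg (A : MDS Ω P) (l : ℝ) (i : ℕ) (ω : Ω) : ℝ :=
  Real.exp (l * A.X i ω - l^2/10 * (A.X i ω)^2)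

noncomputable def hh (A : MDS Ω P) (l : ℝ) (i : ℕ) (ω : Ω) : ℝ :=
  Real.exp (-((7/10) * l^2) * (P[fun ω' => (A.X i ω')^2 | A.F (i-1)]) ω)

noncomputable def Z (A : MDS Ω P) (l : ℝ) : ℕ → Ω → ℝ
  | 0 => fun _ => 1
  | (m+1) => fun ω => Z A l m ω * (gg A l (m+1) ω * hh A l (m+1) ω)

variable {A : MDS Ω P} {l : ℝ}

lemma gg_pos (i : ℕ) (ω : Ω) : 0 < gg A l i ω := Real.exp_pos _
lemma hh_pos (i : ℕ) (ω : Ω) : 0 < hh A l i ω := Real.exp_pos _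

lemma Z_pos : ∀ m, ∀ ω : Ω, 0 < Z A l m ω
  | 0, ω => one_pos
  | (m+1), ω => mul_pos (Z_pos m ω) (mul_pos (gg_pos _ _) (hh_pos _ _))

lemma gg_le (i : ℕ) (ω : Ω) : gg A l i ω ≤ Real.exp (5/2) := by
  apply Real.exp_le_exp.2
  nlinarith [sq_nonneg (l * A.X i ω - 5)]

lemma Y_nonneg (i : ℕ) : ∀ᵐ ω ∂P, 0 ≤ (P[fun ω' => (A.X i ω')^2 | A.F (i-1)]) ω := by
  have h := condExp_nonneg (μ := P) (m := A.F (i-1)) (f := fun ω' => (A.X i ω')^2)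
    (Eventually.of_forall fun ω => sq_nonneg _)
  filter_upwards [h] with ω hω using by simpa using hω

lemma hh_le_one (i : ℕ) : ∀ᵐ ω ∂P, hh A l i ω ≤ 1 := by
  filter_upwards [Y_nonneg (A := A) i] with ω hY
  rw [hh, ← Real.exp_zero]
  apply Real.exp_le_exp.2
  have hc : 0 ≤ (7/10) * l^2 := by positivity
  simpa [neg_mul] using neg_nonpos.2 (mul_nonneg hc hY)

lemma gg_meas (i : ℕ) (h1 : 1 ≤ i) (h2 : i ≤ A.n) : StronglyMeasurable[A.F i] (gg A l i) := by
  apply Real.continuous_exp.comp_stronglyMeasurable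
  exact ((A.meas i h1 h2).const_mul l).sub (((A.meas i h1 h2).pow 2).const_mul (l^2/10))

lemma hh_meas (i : ℕ) : StronglyMeasurable[A.F (i-1)] (hh A l i) := by
  apply Real.continuous_exp.comp_stronglyMeasurable
  exact stronglyMeasurable_condExp.const_mul _

lemma Z_meas : ∀ m, m ≤ A.n → StronglyMeasurable[A.F m] (Z A l m)
  | 0, _ => stronglyMeasurable_const
  | (m+1), hm => by
    have ih := Z_meas m (Nat.le_of_succ_le hm)
    have hg : StronglyMeasurable[A.F (m+1)] (gg A l (m+1)) :=
      gg_meas (m+1) (Nat.succ_le_succ (Nat.zero_le m)) hm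
    have hhm : StronglyMeasurable[A.F (m+1)] (hh A l (m+1)) :=
      (hh_meas (m+1)).mono (A.F_mono (by omega))
    exact (ih.mono (A.F_mono (Nat.le_succ m))).mul (hg.mul hhm)


lemma Z_bdd [IsFiniteMeasure P] :
    ∀ m, ∀ᵐ ω ∂P, Z A l m ω ≤ Real.exp (5/2 * m) := by
  intro m
  induction m with
  | zero => simp [Z, Real.exp_nonneg]
  | succ m ih =>
    filter_upwards [ih, hh_le_one (A := A) (l := l) (m+1)] with ω h1 h2
    have hg := gg_le (A := A) (l := l) (m+1) ω
    have hZ := (Z_pos (A := A) (l := l) m ω).le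
    calc Z A l (m+1) ω = Z A l m ω * (gg A l (m+1) ω * hh A l (m+1) ω) := rfl
      _ ≤ Real.exp (5/2 * m) * (Real.exp (5/2) * 1) := by
          apply mul_le_mul h1 _ (mul_pos (gg_pos _ _) (hh_pos _ _)).le (Real.exp_nonneg _)
          exact mul_le_mul hg h2 (hh_pos _ _).le (Real.exp_nonneg _)
      _ = Real.exp (5/2 * ((m:ℝ)+1)) := by
          rw [mul_one, ← Real.exp_add]; ring_nf
      _ = Real.exp (5/2 * ((m+1 : ℕ):ℝ)) := by push_cast; ring_nf

lemma Z_aesm (m : ℕ) (hm : m ≤ A.n) : AEStronglyMeasurable (Z A l m) P :=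
  ((Z_meas m hm).mono (A.F_le m)).aestronglyMeasurable

lemma Z_int [IsFiniteMeasure P] (m : ℕ) (hm : m ≤ A.n) : Integrable (Z A l m) P := by
  apply Integrable.mono' (integrable_const (Real.exp (5/2 * m))) (Z_aesm m hm)
  filter_upwards [Z_bdd (A := A) (l := l) m] with ω h
  rw [Real.norm_eq_abs, abs_of_pos (Z_pos m ω)]; exact h

lemma X_int (i : ℕ) (h1 : 1 ≤ i) (h2 : i ≤ A.n) [IsFiniteMeasure P] :
    Integrable (A.X i) P := by
  apply Integrable.mono' ((integrable_const 1).add (A.sq_int i h1 h2))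
    ((A.meas i h1 h2).mono (A.F_le i)).aestronglyMeasurable
  apply Eventually.of_forall
  intro ω
  rw [Real.norm_eq_abs]
  simp only [Pi.add_apply]
  nlinarith [sq_nonneg (|A.X i ω| - 1), abs_nonneg (A.X i ω), sq_abs (A.X i ω)]

lemma gg_int [IsFiniteMeasure P] (i : ℕ) (h1 : 1 ≤ i) (h2 : i ≤ A.n) :
    Integrable (gg A l i) P := by
  apply Integrable.mono' (integrable_const (Real.exp (5/2)))
    (((gg_meas i h1 h2).mono (A.F_le i)).aestronglyMeasurable)
  exact Eventually.of_forall fun ω => by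
    rw [Real.norm_eq_abs, abs_of_pos (gg_pos i ω)]; exact gg_le i ω

lemma poly_int [IsFiniteMeasure P] (i : ℕ) (h1 : 1 ≤ i) (h2 : i ≤ A.n) :
    Integrable (fun ω => 1 + l * A.X i ω + (7/10) * l^2 * (A.X i ω)^2) P :=
  ((integrable_const 1).add ((X_int i h1 h2).const_mul l)).add
    ((A.sq_int i h1 h2).const_mul _)

lemma gg_condexp_le [IsFiniteMeasure P] (i : ℕ) (h1 : 1 ≤ i) (h2 : i ≤ A.n) :
    P[gg A l i | A.F (i-1)] ≤ᵐ[P]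
      fun ω => 1 + (7/10) * l^2 * (P[fun ω' => (A.X i ω')^2 | A.F (i-1)]) ω := by
  have hptwise : gg A l i ≤ fun ω => 1 + l * A.X i ω + (7/10) * l^2 * (A.X i ω)^2 := by
    intro ω
    have h := key_ineq (l * A.X i ω)
    have he : l * A.X i ω - l^2/10 * (A.X i ω)^2 = l * A.X i ω - (l * A.X i ω)^2/10 := by ring
    rw [gg, he]
    calc Real.exp (l * A.X i ω - (l * A.X i ω)^2/10)
        ≤ 1 + (l * A.X i ω) + (7/10)*(l * A.X i ω)^2 := h
      _ = 1 + l * A.X i ω + (7/10) * l^2 * (A.X i ω)^2 := by ring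
  have hmono := condExp_mono (m := A.F (i-1)) (gg_int i h1 h2) (poly_int i h1 h2)
    (Eventually.of_forall hptwise)
  refine hmono.trans ?_
  have hsum : P[fun ω => 1 + l * A.X i ω + (7/10) * l^2 * (A.X i ω)^2 | A.F (i-1)] =ᵐ[P]
      P[fun ω => 1 + l * A.X i ω | A.F (i-1)] +
        P[fun ω => (7/10) * l^2 * (A.X i ω)^2 | A.F (i-1)] :=
    condExp_add (f := fun ω => 1 + l * A.X i ω)
      (g := fun ω => (7/10) * l^2 * (A.X i ω)^2)
      ((integrable_const 1).add ((X_int i h1 h2).const_mul l))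
      ((A.sq_int i h1 h2).const_mul _) (A.F (i-1))
  have h2' : P[fun ω => 1 + l * A.X i ω | A.F (i-1)] =ᵐ[P] fun _ => 1 := by
    refine (condExp_add (integrable_const 1) ((X_int i h1 h2).const_mul l) (A.F (i-1))).trans ?_
    have hz : P[fun ω => l * A.X i ω | A.F (i-1)] =ᵐ[P] 0 := by
      have hs := condExp_smul (μ := P) (m := A.F (i-1)) (l : ℝ) (A.X i)
      refine hs.trans ?_
      filter_upwards [A.mean_zero i h1 h2] with ω h0
      simp only [Pi.smul_apply, smul_eq_mul]
      simp [h0]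
    filter_upwards [hz] with ω hz0
    rw [condExp_const (A.F_le (i-1))]
    simp only [Pi.add_apply] at *
    simp [hz0]
  have h3' : P[fun ω => (7/10) * l^2 * (A.X i ω)^2 | A.F (i-1)] =ᵐ[P]
      fun ω => (7/10) * l^2 * (P[fun ω' => (A.X i ω')^2 | A.F (i-1)]) ω := by
    have hs := condExp_smul (μ := P) (m := A.F (i-1)) ((7/10) * l^2 : ℝ)
      (fun ω => (A.X i ω)^2)
    refine EventuallyEq.trans (EventuallyEq.of_eq ?_) (hs.trans ?_)
    · rfl
    · filter_upwards with ω; simp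
  filter_upwards [hsum, h2', h3'] with ω e1 e2 e3
  rw [e1]
  simp only [Pi.add_apply, e2, e3]
  exact le_of_eq (by ring)

lemma Z_integral_le_one [IsProbabilityMeasure P] : ∀ m, m ≤ A.n → ∫ ω, Z A l m ω ∂P ≤ 1 := by
  intro m
  induction m with
  | zero => intro _; simp [Z]
  | succ m ih =>
    intro hm
    have hmn : m ≤ A.n := Nat.le_of_succ_le hm
    have h1i : 1 ≤ m+1 := Nat.succ_le_succ (Nat.zero_le m)
    have hhm : StronglyMeasurable[A.F m] (hh A l (m+1)) := hh_meas (m+1)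
    set Φ : Ω → ℝ := fun ω => Z A l m ω * hh A l (m+1) ω with hΦdef
    have hΦmeas : StronglyMeasurable[A.F m] Φ := (Z_meas m hmn).mul hhm
    have hZ1int : Integrable (Z A l (m+1)) P := Z_int (m+1) hm
    have hZmint : Integrable (Z A l m) P := Z_int m hmn
    have hgint : Integrable (gg A l (m+1)) P := gg_int (m+1) h1i hm
    have hrearr : Z A l (m+1) = Φ * gg A l (m+1) := by
      funext ω
      show Z A l m ω * (gg A l (m+1) ω * hh A l (m+1) ω)
        = (Z A l m ω * hh A l (m+1) ω) * gg A l (m+1) ω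
      ring
    have hfg : Integrable (Φ * gg A l (m+1)) P := hrearr ▸ hZ1int
    have hfac := condExp_mul_of_stronglyMeasurable_left (m := A.F m) (μ := P) hΦmeas hfg hgint
    -- bounds on the conditional expectation of gg
    have hPg0 : ∀ᵐ ω ∂P, 0 ≤ (P[gg A l (m+1) | A.F m]) ω := by
      have h := condExp_nonneg (μ := P) (m := A.F m) (f := gg A l (m+1))
        (Eventually.of_forall fun ω => (gg_pos _ _).le)
      filter_upwards [h] with ω hω using by simpa using hω
    have hPgub : ∀ᵐ ω ∂P, (P[gg A l (m+1) | A.F m]) ω ≤ Real.exp (5/2) := by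
      have h := condExp_mono (m := A.F m) hgint (integrable_const (Real.exp (5/2)))
        (Eventually.of_forall fun ω => gg_le _ ω)
      rw [condExp_const (A.F_le m)] at h
      filter_upwards [h] with ω hω using hω
    have hint1 : Integrable (fun ω => Φ ω * (P[gg A l (m+1) | A.F m]) ω) P := by
      apply Integrable.mono' (integrable_const (Real.exp (5/2 * m) * Real.exp (5/2)))
        (((hΦmeas.mono (A.F_le m)).mul
          (stronglyMeasurable_condExp.mono (A.F_le m))).aestronglyMeasurable)
      filter_upwards [Z_bdd (A := A) (l := l) m, hh_le_one (A := A) (l := l) (m+1),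
        hPg0, hPgub] with ω h1 h2 h3 h4
      have hΦ0 : 0 ≤ Φ ω := mul_nonneg (Z_pos m ω).le (hh_pos _ _).le
      have hΦub : Φ ω ≤ Real.exp (5/2 * m) := by
        calc Φ ω = Z A l m ω * hh A l (m+1) ω := rfl
          _ ≤ Real.exp (5/2 * m) * 1 :=
            mul_le_mul h1 h2 (hh_pos _ _).le (Real.exp_nonneg _)
          _ = Real.exp (5/2 * m) := mul_one _
      simp only [Pi.mul_apply]
      rw [Real.norm_eq_abs, abs_of_nonneg (mul_nonneg hΦ0 h3)]
      exact mul_le_mul hΦub h4 h3 (Real.exp_nonneg _)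
    have hle : ∀ᵐ ω ∂P, Φ ω * (P[gg A l (m+1) | A.F m]) ω ≤ Z A l m ω := by
      filter_upwards [gg_condexp_le (A := A) (l := l) (m+1) h1i hm,
        Y_nonneg (A := A) (m+1), hPg0] with ω hgle hY hPg
      set Y := (P[fun ω' => (A.X (m+1) ω')^2 | A.F m]) ω with hYdef
      have hΦ0 : 0 ≤ Φ ω := mul_nonneg (Z_pos m ω).le (hh_pos _ _).le
      have step1 : Φ ω * (P[gg A l (m+1) | A.F m]) ω ≤ Φ ω * (1 + (7/10) * l^2 * Y) :=
        mul_le_mul_of_nonneg_left hgle hΦ0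
      have hexp1 : Real.exp (-((7/10) * l^2) * Y) * Real.exp (((7/10) * l^2) * Y) = 1 := by
        rw [← Real.exp_add]
        have : -((7/10) * l^2) * Y + ((7/10) * l^2) * Y = 0 := by ring
        rw [this, Real.exp_zero]
      have hexp2 := Real.add_one_le_exp (((7/10) * l^2) * Y)
      have hhY : hh A l (m+1) ω * (1 + (7/10) * l^2 * Y) ≤ 1 := by
        have hhdef : hh A l (m+1) ω = Real.exp (-((7/10) * l^2) * Y) := rfl
        rw [hhdef]
        nlinarith [Real.exp_pos (-((7/10) * l^2) * Y), Real.exp_pos (((7/10) * l^2) * Y)]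
      have step2 : Φ ω * (1 + (7/10) * l^2 * Y) ≤ Z A l m ω := by
        have : Φ ω * (1 + (7/10) * l^2 * Y)
            = Z A l m ω * (hh A l (m+1) ω * (1 + (7/10) * l^2 * Y)) := by
          rw [hΦdef]; ring
        rw [this]
        calc Z A l m ω * (hh A l (m+1) ω * (1 + (7/10) * l^2 * Y))
            ≤ Z A l m ω * 1 := mul_le_mul_of_nonneg_left hhY (Z_pos m ω).le
          _ = Z A l m ω := mul_one _
      exact step1.trans step2
    calc ∫ ω, Z A l (m+1) ω ∂P
        = ∫ ω, (Φ * gg A l (m+1)) ω ∂P := by rw [hrearr]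
      _ = ∫ ω, (P[Φ * gg A l (m+1) | A.F m]) ω ∂P := (integral_condExp (A.F_le m)).symm
      _ = ∫ ω, Φ ω * (P[gg A l (m+1) | A.F m]) ω ∂P :=
          integral_congr_ae (hfac.mono fun ω hω => by simpa using hω)
      _ ≤ ∫ ω, Z A l m ω ∂P := integral_mono_ae hint1 hZmint hle
      _ ≤ 1 := ih hmn

lemma Z_eq (m : ℕ) (ω : Ω) : Z A l m ω =
    Real.exp (l * (∑ i ∈ Finset.Icc 1 m, A.X i ω)
      - l^2/10 * (∑ i ∈ Finset.Icc 1 m, (A.X i ω)^2)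
      - (7/10) * l^2 * (∑ i ∈ Finset.Icc 1 m, (P[fun ω' => (A.X i ω')^2|A.F (i-1)]) ω)) := by
  induction m with
  | zero => simp [Z]
  | succ m ih =>
    have h1 : (1:ℕ) ≤ m + 1 := Nat.succ_le_succ (Nat.zero_le m)
    rw [show Z A l (m+1) ω = Z A l m ω * (gg A l (m+1) ω * hh A l (m+1) ω) from rfl, ih,
      Finset.sum_Icc_succ_top h1, Finset.sum_Icc_succ_top h1, Finset.sum_Icc_succ_top h1,
      gg, hh, ← Real.exp_add, ← Real.exp_add]
    congr 1
    ring

lemma exp_integral_le_one [IsProbabilityMeasure P] (A : MDS Ω P) (l : ℝ) :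
    ∫ ω, Real.exp (l * A.S ω - l^2/10 * A.QV ω - (7/10) * l^2 * A.CV ω) ∂P ≤ 1 := by
  have h := Z_integral_le_one (A := A) (l := l) A.n le_rfl
  calc ∫ ω, Real.exp (l * A.S ω - l^2/10 * A.QV ω - (7/10) * l^2 * A.CV ω) ∂P
      = ∫ ω, Z A l A.n ω ∂P := integral_congr_ae (Eventually.of_forall fun ω => by
        rw [Z_eq]; rfl)
    _ ≤ 1 := h

variable [IsProbabilityMeasure P]

lemma Bsq_pos (A : MDS Ω P) : 0 < A.Bsq := by
  apply Finset.sum_pos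
  · intro i hi
    rw [Finset.mem_Icc] at hi
    exact A.var_pos i hi.1 hi.2
  · exact ⟨1, Finset.mem_Icc.2 ⟨le_rfl, A.npos⟩⟩

lemma QV_nonneg (A : MDS Ω P) (ω : Ω) : 0 ≤ A.QV ω :=
  Finset.sum_nonneg fun i _ => sq_nonneg _

lemma S_meas (A : MDS Ω P) : StronglyMeasurable (A.S) := by
  apply Finset.stronglyMeasurable_fun_sum
  intro i hi
  rw [Finset.mem_Icc] at hi
  exact (A.meas i hi.1 hi.2).mono (A.F_le i)

lemma QV_meas (A : MDS Ω P) : StronglyMeasurable (A.QV) := by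
  apply Finset.stronglyMeasurable_fun_sum
  intro i hi
  rw [Finset.mem_Icc] at hi
  exact ((A.meas i hi.1 hi.2).mono (A.F_le i)).pow 2

lemma CV_meas (A : MDS Ω P) : StronglyMeasurable (A.CV) := by
  apply Finset.stronglyMeasurable_fun_sum
  intro i _
  exact stronglyMeasurable_condExp.mono (A.F_le _)

lemma QV_int (A : MDS Ω P) : Integrable A.QV P := by
  apply integrable_finset_sum
  intro i hi
  rw [Finset.mem_Icc] at hi
  exact A.sq_int i hi.1 hi.2

lemma QV_integral (A : MDS Ω P) : ∫ ω, A.QV ω ∂P = A.Bsq := by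
  rw [MDS.Bsq]
  exact integral_finset_sum _ fun i hi => by
    rw [Finset.mem_Icc] at hi
    exact A.sq_int i hi.1 hi.2

/-- Markov bound for the tail of the quadratic variation. -/
lemma tail_bound (A : MDS Ω P) (K : ℕ) :
    (P {ω | 16 * 16^K * A.Bsq ≤ A.QV ω}).toReal ≤ 1 / (16:ℝ)^(K+1) := by
  have h := mul_meas_ge_le_integral_of_nonneg
    (Eventually.of_forall (QV_nonneg A)) (QV_int A) (16 * 16^K * A.Bsq)
  rw [QV_integral] at h
  have hB := Bsq_pos A
  have hc : (0:ℝ) < 16 * 16^K * A.Bsq := by positivity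
  have htr : (P {ω | 16 * 16^K * A.Bsq ≤ A.QV ω}).toReal ≤ A.Bsq / (16 * 16^K * A.Bsq) := by
    rw [le_div_iff₀ hc]; rw [measureReal_def] at h; linarith [h]
  calc (P {ω | 16 * 16^K * A.Bsq ≤ A.QV ω}).toReal
      ≤ A.Bsq / (16 * 16^K * A.Bsq) := htr
    _ = 1 / (16:ℝ)^(K+1) := by
        field_simp
        ring

set_option maxHeartbeats 1000000 in
/-- Chernoff bound on a dyadic slice of the quadratic variation. -/
lemma slice_bound (A : MDS Ω P) {δ : ℝ} (hA1 : A.CondA1 δ) {x : ℝ} (hx : 0 < x) (k : ℕ) :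
    (P {ω | x * Real.sqrt (A.QV ω) ≤ A.S ω ∧ 16 * 16^k * A.Bsq ≤ A.QV ω ∧
        A.QV ω ≤ 16 * 16^(k+1) * A.Bsq}).toReal
      ≤ Real.exp (-((8/5 - (119/640) * (1/16^k)) * x^2)) := by
  obtain ⟨hδ0, hδ1, hae⟩ := hA1
  have hBsq := Bsq_pos A
  set B := Real.sqrt A.Bsq with hBdef
  have hB2 : B^2 = A.Bsq := Real.sq_sqrt hBsq.le
  have hBpos : 0 < B := Real.sqrt_pos.2 hBsq
  set l : ℝ := x / (2 * B * 4^k) with hldef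
  have hlpos : 0 < l := by positivity
  set Ek : ℝ := 8/5 - (119/640) * (1/16^k) with hEkdef
  set Ak : Set Ω := {ω | x * Real.sqrt (A.QV ω) ≤ A.S ω ∧ 16 * 16^k * A.Bsq ≤ A.QV ω ∧
      A.QV ω ≤ 16 * 16^(k+1) * A.Bsq} with hAkdef
  set G : Set Ω := {ω | A.CV ω ≤ 17/16 * A.Bsq} with hGdef
  have hGae : ∀ᵐ ω ∂P, ω ∈ G := by
    filter_upwards [hae] with ω h
    have habs := abs_le.1 h
    have hδsq : δ^2 ≤ 1/16 := by nlinarith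
    have : A.CV ω - A.Bsq ≤ (1/16) * A.Bsq := by nlinarith [habs.2]
    simp only [hGdef, Set.mem_setOf_eq]
    linarith
  -- measurability
  have hAkmeas : MeasurableSet Ak := by
    apply MeasurableSet.inter
    · exact measurableSet_le ((Real.continuous_sqrt.comp_stronglyMeasurable (QV_meas A)).measurable.const_mul x)
        (S_meas A).measurable
    · exact MeasurableSet.inter
        (measurableSet_le measurable_const (QV_meas A).measurable)
        (measurableSet_le (QV_meas A).measurable measurable_const)
  have hGmeas : MeasurableSet G := measurableSet_le (CV_meas A).measurable measurable_const
  -- pointwise exponent bound on Ak ∩ G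
  have hpt : ∀ ω ∈ Ak ∩ G, Real.exp (Ek * x^2) ≤
      Real.exp (l * A.S ω - l^2/10 * A.QV ω - (7/10) * l^2 * A.CV ω) := by
    rintro ω ⟨⟨hS, hlo, hhi⟩, hGω⟩
    apply Real.exp_le_exp.2
    have h4k : ((4:ℝ)^k)^2 = 16^k := by
      rw [← pow_mul, show k*2 = 2*k by ring, pow_mul]; norm_num
    have h4k1 : ((4:ℝ)^(k+1))^2 = 16^(k+1) := by
      rw [← pow_mul, show (k+1)*2 = 2*(k+1) by ring, pow_mul]; norm_num
    set v := Real.sqrt (A.QV ω) with hvdef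
    have hv2 : v^2 = A.QV ω := Real.sq_sqrt (QV_nonneg A ω)
    have hv0 : 0 ≤ v := Real.sqrt_nonneg _
    have hv1 : 4 * 4^k * B ≤ v := by
      rw [hvdef, show (4 * 4^k * B) = Real.sqrt ((4 * 4^k * B)^2) from
        (Real.sqrt_sq (by positivity)).symm]
      apply Real.sqrt_le_sqrt
      calc (4 * 4^k * B)^2 = 16 * 16^k * A.Bsq := by
            rw [mul_pow, mul_pow, hB2, h4k]; norm_num
        _ ≤ A.QV ω := hlo
    have hv2' : v ≤ 4 * 4^(k+1) * B := by
      rw [hvdef, show (4 * 4^(k+1) * B) = Real.sqrt ((4 * 4^(k+1) * B)^2) from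
        (Real.sqrt_sq (by positivity)).symm]
      apply Real.sqrt_le_sqrt
      calc A.QV ω ≤ 16 * 16^(k+1) * A.Bsq := hhi
        _ = (4 * 4^(k+1) * B)^2 := by
            rw [mul_pow, mul_pow, hB2, h4k1]; norm_num
    -- the normalized variable w = l * v lies in [2x, 8x]
    have hlB : l * (4 * 4^k * B) = 2 * x := by
      rw [hldef]; field_simp; ring
    have hlB' : l * (4 * 4^(k+1) * B) = 8 * x := by
      rw [hldef]; field_simp; ring
    have hw1 : 2 * x ≤ l * v := by
      rw [← hlB]; exact mul_le_mul_of_nonneg_left hv1 hlpos.le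
    have hw2 : l * v ≤ 8 * x := by
      rw [← hlB']; exact mul_le_mul_of_nonneg_left hv2' hlpos.le
    have hquad : x * (l * v) - (l * v)^2 / 10 ≥ (8/5) * x^2 := by
      nlinarith [mul_nonneg (sub_nonneg.2 hw1) (sub_nonneg.2 hw2)]
    have hCVb : (7/10) * l^2 * A.CV ω ≤ (119/640) * (1/16^k) * x^2 := by
      have hGω' : A.CV ω ≤ 17/16 * A.Bsq := hGω
      have hl2 : l^2 = x^2 / (4 * A.Bsq * 16^k) := by
        rw [hldef, div_pow]
        congr 1
        rw [mul_pow, mul_pow, hB2, h4k]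
        norm_num
      have h16 : (0:ℝ) < 16^k := by positivity
      have hld : l^2 * (4 * A.Bsq * 16^k) = x^2 := by
        rw [hl2]; field_simp
      have hkey : (119/640) * (1/16^k) * x^2 = (119/160) * l^2 * A.Bsq := by
        rw [← hld]; field_simp; ring
      rw [hkey]
      have := mul_le_mul_of_nonneg_left hGω' (by positivity : (0:ℝ) ≤ (7/10) * l^2)
      linarith
    have hlS : l * (x * v) ≤ l * A.S ω := mul_le_mul_of_nonneg_left hS hlpos.le
    have hrw : l * (x * v) = x * (l * v) := by ring
    have hrw2 : l^2/10 * A.QV ω = (l * v)^2 / 10 := by rw [← hv2]; ring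
    rw [hEkdef]
    calc (8/5 - 119/640 * (1/16^k)) * x^2
        = (8/5) * x^2 - (119/640) * (1/16^k) * x^2 := by ring
      _ ≤ (x * (l * v) - (l * v)^2/10) - (7/10) * l^2 * A.CV ω := by
          have := hquad; linarith [hCVb]
      _ ≤ l * A.S ω - l^2/10 * A.QV ω - (7/10) * l^2 * A.CV ω := by
          rw [hrw2]
          have : x * (l * v) ≤ l * A.S ω := by rw [← hrw]; exact hlS
          linarith
  -- Chernoff
  have hZint : Integrable (fun ω => Real.exp (l * A.S ω - l^2/10 * A.QV ω
      - (7/10) * l^2 * A.CV ω)) P := by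
    have := Z_int (A := A) (l := l) A.n le_rfl
    apply this.congr
    exact Eventually.of_forall fun ω => by rw [Z_eq]; rfl
  have hZnn : 0 ≤ᵐ[P] (fun ω => Real.exp (l * A.S ω - l^2/10 * A.QV ω
      - (7/10) * l^2 * A.CV ω)) :=
    Eventually.of_forall fun ω => (Real.exp_pos _).le
  have hint_le_one : ∫ ω, Real.exp (l * A.S ω - l^2/10 * A.QV ω
      - (7/10) * l^2 * A.CV ω) ∂P ≤ 1 := exp_integral_le_one A l
  have hmeasAkG : MeasurableSet (Ak ∩ G) := hAkmeas.inter hGmeas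
  have hchern : Real.exp (Ek * x^2) * (P (Ak ∩ G)).toReal ≤ 1 := by
    have h1 : ∫ ω in Ak ∩ G, Real.exp (Ek * x^2) ∂P ≤
        ∫ ω in Ak ∩ G, Real.exp (l * A.S ω - l^2/10 * A.QV ω - (7/10) * l^2 * A.CV ω) ∂P := by
      apply setIntegral_mono_on (integrableOn_const (measure_ne_top _ _))
        (hZint.integrableOn) hmeasAkG
      intro ω hω
      exact hpt ω hω
    rw [setIntegral_const] at h1
    have h2 := setIntegral_le_integral (s := Ak ∩ G) hZint hZnn
    calc Real.exp (Ek * x^2) * (P (Ak ∩ G)).toReal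
        = (P (Ak ∩ G)).toReal • Real.exp (Ek * x^2) := by rw [smul_eq_mul]; ring
      _ ≤ ∫ ω, Real.exp (l * A.S ω - l^2/10 * A.QV ω - (7/10) * l^2 * A.CV ω) ∂P :=
          le_trans (le_of_eq rfl) (h1.trans h2)
      _ ≤ 1 := hint_le_one
  -- P Ak = P (Ak ∩ G) up to null set
  have hPAk : (P Ak).toReal ≤ (P (Ak ∩ G)).toReal := by
    have hsub : Ak ⊆ (Ak ∩ G) ∪ Gᶜ := by
      intro ω hω
      by_cases hg : ω ∈ G
      · exact Or.inl ⟨hω, hg⟩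
      · exact Or.inr hg
    have hGc : P Gᶜ = 0 := by
      rw [← compl_compl G] at hGae ⊢
      exact ae_iff.1 ((hGae.mono fun ω h => h))
    have : P Ak ≤ P (Ak ∩ G) := by
      calc P Ak ≤ P ((Ak ∩ G) ∪ Gᶜ) := measure_mono hsub
        _ ≤ P (Ak ∩ G) + P Gᶜ := measure_union_le _ _
        _ = P (Ak ∩ G) := by rw [hGc, add_zero]
    exact ENNReal.toReal_mono (measure_ne_top _ _) this
  have hexp_pos : 0 < Real.exp (Ek * x^2) := Real.exp_pos _
  rw [Real.exp_neg]
  have hfin : (P (Ak ∩ G)).toReal ≤ (Real.exp (Ek * x^2))⁻¹ := by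
    rw [← one_div]
    rw [le_div_iff₀ hexp_pos]
    linarith [hchern]
  exact hPAk.trans hfin

set_option maxHeartbeats 1000000 in
lemma cover_bound (A : MDS Ω P) {δ : ℝ} (hA1 : A.CondA1 δ) {x : ℝ} (hx : 0 < x) (K : ℕ) :
    (P {ω | x * Real.sqrt (A.QV ω) ≤ A.S ω ∧ 16 * A.Bsq ≤ A.QV ω}).toReal
      ≤ (∑ k ∈ Finset.range K, Real.exp (-((8/5 - (119/640) * (1/16^k)) * x^2)))
          + 1 / (16:ℝ)^(K+1) := by
  set E : Set Ω := {ω | x * Real.sqrt (A.QV ω) ≤ A.S ω ∧ 16 * A.Bsq ≤ A.QV ω} with hEdef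
  set Ak : ℕ → Set Ω := fun k => {ω | x * Real.sqrt (A.QV ω) ≤ A.S ω ∧
      16 * 16^k * A.Bsq ≤ A.QV ω ∧ A.QV ω ≤ 16 * 16^(k+1) * A.Bsq} with hAkdef
  set T : ℕ → Set Ω := fun k => {ω | 16 * 16^k * A.Bsq ≤ A.QV ω} with hTdef
  have main : ∀ K : ℕ, P E ≤ ∑ k ∈ Finset.range K, P (Ak k) + P (E ∩ T K) := by
    intro K
    induction K with
    | zero =>
      simp only [Finset.range_zero, Finset.sum_empty, zero_add]
      apply measure_mono
      intro ω hω
      refine ⟨hω, ?_⟩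
      show 16 * 16^0 * A.Bsq ≤ A.QV ω
      simpa using hω.2
    | succ K ih =>
      have hstep : P (E ∩ T K) ≤ P (Ak K) + P (E ∩ T (K+1)) := by
        refine le_trans (measure_mono ?_) (measure_union_le _ _)
        rintro ω ⟨hE, hT⟩
        rcases le_or_gt (A.QV ω) (16 * 16^(K+1) * A.Bsq) with hle | hlt
        · exact Or.inl ⟨hE.1, hT, hle⟩
        · exact Or.inr ⟨hE, hlt.le⟩
      calc P E ≤ ∑ k ∈ Finset.range K, P (Ak k) + P (E ∩ T K) := ih
        _ ≤ ∑ k ∈ Finset.range K, P (Ak k) + (P (Ak K) + P (E ∩ T (K+1))) :=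
            add_le_add_right hstep _
        _ = ∑ k ∈ Finset.range (K+1), P (Ak k) + P (E ∩ T (K+1)) := by
            rw [Finset.sum_range_succ]; ring
  have hEbound : P E ≤ ∑ k ∈ Finset.range K, P (Ak k) + P (T K) :=
    (main K).trans (add_le_add_right (measure_mono Set.inter_subset_right) _)
  have htoReal : (P E).toReal ≤ (∑ k ∈ Finset.range K, (P (Ak k)).toReal) + (P (T K)).toReal := by
    have hne : ∑ k ∈ Finset.range K, P (Ak k) + P (T K) ≠ ⊤ := by
      apply ENNReal.add_ne_top.2
      constructor
      · exact (ENNReal.sum_lt_top.2 fun k _ => measure_lt_top _ _).ne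
      · exact measure_ne_top _ _
    calc (P E).toReal ≤ (∑ k ∈ Finset.range K, P (Ak k) + P (T K)).toReal :=
        ENNReal.toReal_mono hne hEbound
      _ = (∑ k ∈ Finset.range K, (P (Ak k)).toReal) + (P (T K)).toReal := by
        rw [ENNReal.toReal_add ((ENNReal.sum_lt_top.2 fun k _ => measure_lt_top _ _).ne)
          (measure_ne_top _ _), ENNReal.toReal_sum (fun k _ => measure_ne_top _ _)]
  refine htoReal.trans (add_le_add ?_ ?_)
  · apply Finset.sum_le_sum
    intro k _
    exact slice_bound A hA1 hx k
  · exact tail_bound A K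

end LQV

/-- Lemma 3.8: under condition (A1), for all `x > 0`,
`P(S_n ≥ x √[S]_n, [S]_n ≥ 16 B_n²) ≤ (2/3) x^{-2/3} exp(-(3/4) x²)`. -/
theorem exponential_bound_large_quadratic_variation :
    ∀ (Ω : Type) [MeasurableSpace Ω] (P : Measure Ω), IsProbabilityMeasure P →
      ∀ (A : MDS Ω P) (δ : ℝ), A.CondA1 δ →
        ∀ x : ℝ, 0 < x →
          (P {ω | x * Real.sqrt (A.QV ω) ≤ A.S ω ∧ 16 * A.Bsq ≤ A.QV ω}).toReal ≤
            2 / 3 * x ^ (-(2 : ℝ) / 3) * Real.exp (-(3 / 4) * x ^ 2) := by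
  intro Ω mΩ P hP A δ hA1 x hx
  haveI := hP
  have hcover := LQV.cover_bound A hA1 hx ⌈(3/10) * x^2⌉₊
  have hK1 : 1 ≤ ⌈(3/10) * x^2⌉₊ := by
    have : 0 < ⌈(3/10) * x^2⌉₊ := Nat.ceil_pos.2 (by positivity)
    omega
  have hsum := sum_slices_le (T := x^2) (by positivity) _ hK1
  have hfin := final_numeric hx
  calc (P {ω | x * Real.sqrt (A.QV ω) ≤ A.S ω ∧ 16 * A.Bsq ≤ A.QV ω}).toReal
      ≤ (∑ k ∈ Finset.range ⌈(3/10) * x^2⌉₊,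
          Real.exp (-((8/5 - (119/640) * (1/16^k)) * x^2)))
          + 1 / (16:ℝ)^(⌈(3/10) * x^2⌉₊ + 1) := hcover
    _ ≤ (Real.exp (-(905/640) * x^2) + ((⌈(3/10) * x^2⌉₊ : ℝ) - 1) * Real.exp (-(397/250) * x^2))
          + 1 / (16:ℝ)^(⌈(3/10) * x^2⌉₊ + 1) := by linarith [hsum]
    _ ≤ 2 / 3 * x ^ (-(2 : ℝ) / 3) * Real.exp (-(3 / 4) * x ^ 2) := by
        have := hfin
        linarith [this]
end
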